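/- arXiv:2107.04783 — 5 statements merged into one kernel-verified Lean document; each statement's English description precedes it below -/
import Mathlib

section
/- Let Γ and Δ = {1,…,d} be finite sets, K ≤ Sym(Γ), L ≤ Sym(Δ), and let m ≥ 2 be an integer. Then (K↑L)^(m) = K^(m) ↑ L^[k], where k = min{k_m, d} and k_m is the number of orbits of K in its componentwise action on Γ^m. -/
open Equiv MulAction Pointwise

/-- The `m`-closure of a permutation group `G ≤ Sym(Ω)`: the largest subgroup of `Sym(Ω)`
having the same orbits as `G` in the induced componentwise action on `Ω^m`. -/
def mClosure {Ω : Type*} (m : ℕ) (G : Subgroup (Equiv.Perm Ω)) : Subgroup (Equiv.Perm Ω) :=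
  sSup {H : Subgroup (Equiv.Perm Ω) |
    ∀ α : Fin m → Ω, MulAction.orbit H α = MulAction.orbit G α}

/-- An ordered partition of `Ω` into at most `m` nonempty classes. -/
structure OrderedPartition (Ω : Type*) (m : ℕ) where
  classes : List (Set Ω)
  length_le : classes.length ≤ m
  nonempty : ∀ s ∈ classes, s.Nonempty
  pairwise_disjoint : classes.Pairwise Disjoint
  covers : ∀ x : Ω, ∃ s ∈ classes, x ∈ s

namespace OrderedPartition

variable {Ω : Type*} {m : ℕ}

theorem ext' {P Q : OrderedPartition Ω m} (h : P.classes = Q.classes) : P = Q := by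
  cases P; cases Q; simpa using h

/-- The natural action of a permutation on an ordered partition, classwise. -/
def act (f : Equiv.Perm Ω) (P : OrderedPartition Ω m) : OrderedPartition Ω m where
  classes := P.classes.map fun s => f '' s
  length_le := by simpa using P.length_le
  nonempty := by
    intro s hs
    obtain ⟨t, ht, rfl⟩ := List.mem_map.mp hs
    exact (P.nonempty t ht).image _
  pairwise_disjoint :=
    P.pairwise_disjoint.map _ fun s t h => (Set.disjoint_image_iff f.injective).mpr h
  covers := by
    intro x
    obtain ⟨s, hs, hx⟩ := P.covers (f⁻¹ x)
    exact ⟨f '' s, List.mem_map_of_mem hs, f⁻¹ x, hx, by simp⟩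

instance : SMul (Equiv.Perm Ω) (OrderedPartition Ω m) := ⟨act⟩

theorem smul_classes (f : Equiv.Perm Ω) (P : OrderedPartition Ω m) :
    (f • P).classes = P.classes.map fun s => f '' s := rfl

instance : MulAction (Equiv.Perm Ω) (OrderedPartition Ω m) where
  one_smul P := ext' (by simp [smul_classes])
  mul_smul f g P := ext' (by
    simp [smul_classes, List.map_map, Function.comp_def, Set.image_image])

end OrderedPartition

/-- The partition `m`-closure `G^[m]` of a permutation group `G ≤ Sym(Ω)`: the largest
subgroup of `Sym(Ω)` having the same orbits as `G` in its induced action on the set of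
ordered partitions of `Ω` into at most `m` nonempty classes. -/
def partClosure {Ω : Type*} (m : ℕ) (G : Subgroup (Equiv.Perm Ω)) : Subgroup (Equiv.Perm Ω) :=
  sSup {H : Subgroup (Equiv.Perm Ω) |
    ∀ P : OrderedPartition Ω m, MulAction.orbit H P = MulAction.orbit G P}

/-- The element `(g_1, …, g_d; ḡ)` of the wreath product in product action:
`(ω^g)_i = (ω_{i^{ḡ⁻¹}})^{g_{i^{ḡ⁻¹}}}`. -/
def wreathElem {Γ Δ : Type*} (gs : Δ → Equiv.Perm Γ) (σ : Equiv.Perm Δ) :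
    Equiv.Perm (Δ → Γ) where
  toFun ω i := gs (σ⁻¹ i) (ω (σ⁻¹ i))
  invFun ω i := (gs i)⁻¹ (ω (σ i))
  left_inv ω := by funext i; simp
  right_inv ω := by funext i; simp

theorem wreathElem_apply {Γ Δ : Type*} (gs : Δ → Equiv.Perm Γ) (σ : Equiv.Perm Δ)
    (ω : Δ → Γ) (i : Δ) : wreathElem gs σ ω i = gs (σ⁻¹ i) (ω (σ⁻¹ i)) := rfl

theorem wreathElem_one {Γ Δ : Type*} :
    wreathElem (fun _ : Δ => (1 : Equiv.Perm Γ)) 1 = 1 := by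
  refine Equiv.ext fun ω => funext fun i => ?_
  simp [wreathElem_apply]

theorem wreathElem_mul {Γ Δ : Type*} (gs hs : Δ → Equiv.Perm Γ) (σ τ : Equiv.Perm Δ) :
    wreathElem gs σ * wreathElem hs τ = wreathElem (fun j => gs (τ j) * hs j) (σ * τ) := by
  refine Equiv.ext fun ω => funext fun i => ?_
  simp [wreathElem_apply, Equiv.Perm.mul_apply, mul_inv_rev]

theorem wreathElem_inv {Γ Δ : Type*} (gs : Δ → Equiv.Perm Γ) (σ : Equiv.Perm Δ) :
    (wreathElem gs σ)⁻¹ = wreathElem (fun j => (gs (σ⁻¹ j))⁻¹) σ⁻¹ := by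
  rw [inv_eq_iff_mul_eq_one, wreathElem_mul]
  simpa using wreathElem_one

/-- The wreath product `K ↑ L` of `K ≤ Sym(Γ)` and `L ≤ Sym(Δ)` in product action,
as a subgroup of `Sym(Γ^Δ)`. -/
def wreathProduct {Γ Δ : Type*} (K : Subgroup (Equiv.Perm Γ)) (L : Subgroup (Equiv.Perm Δ)) :
    Subgroup (Equiv.Perm (Δ → Γ)) where
  carrier := {h | ∃ (gs : Δ → Equiv.Perm Γ) (σ : Equiv.Perm Δ),
    (∀ i, gs i ∈ K) ∧ σ ∈ L ∧ h = wreathElem gs σ}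
  one_mem' := ⟨fun _ => 1, 1, fun _ => K.one_mem, L.one_mem, wreathElem_one.symm⟩
  mul_mem' := by
    rintro f h ⟨gs, σ, hgs, hσ, rfl⟩ ⟨hs, τ, hhs, hτ, rfl⟩
    exact ⟨fun j => gs (τ j) * hs j, σ * τ, fun j => K.mul_mem (hgs _) (hhs _),
      L.mul_mem hσ hτ, wreathElem_mul gs hs σ τ⟩
  inv_mem' := by
    rintro f ⟨gs, σ, hgs, hσ, rfl⟩
    exact ⟨fun j => (gs (σ⁻¹ j))⁻¹, σ⁻¹, fun j => K.inv_mem (hgs _), L.inv_mem hσ,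
      wreathElem_inv gs σ⟩

/-- `k_m`: the number of orbits of `K ≤ Sym(Γ)` in its componentwise action on `Γ^m`. -/
noncomputable def numOrbits {Γ : Type*} (m : ℕ) (K : Subgroup (Equiv.Perm Γ)) : ℕ :=
  Nat.card (MulAction.orbitRel.Quotient K (Fin m → Γ))

/-- A permutation group `L ≤ Sym(Δ)` is primitive if it is transitive and preserves
no nontrivial partition of `Δ` (partitions being identified with equivalence relations). -/
def IsPrimitiveSubgroup {Δ : Type*} (L : Subgroup (Equiv.Perm Δ)) : Prop :=
  (∀ x y : Δ, ∃ g ∈ L, g x = y) ∧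
  ∀ r : Setoid Δ, (∀ g ∈ L, ∀ x y : Δ, r.r x y → r.r (g x) (g y)) → r = ⊥ ∨ r = ⊤

/-- The direct product `K × L ≤ Sym(Γ × Δ)` acting coordinatewise on `Γ × Δ`. -/
def prodSubgroup {Γ Δ : Type*} (K : Subgroup (Equiv.Perm Γ)) (L : Subgroup (Equiv.Perm Δ)) :
    Subgroup (Equiv.Perm (Γ × Δ)) where
  carrier := {h | ∃ k ∈ K, ∃ l ∈ L, h = Equiv.prodCongr k l}
  one_mem' := ⟨1, K.one_mem, 1, L.one_mem, Equiv.ext fun x => rfl⟩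
  mul_mem' := by
    rintro f h ⟨k₁, hk₁, l₁, hl₁, rfl⟩ ⟨k₂, hk₂, l₂, hl₂, rfl⟩
    exact ⟨k₁ * k₂, K.mul_mem hk₁ hk₂, l₁ * l₂, L.mul_mem hl₁ hl₂, Equiv.ext fun x => rfl⟩
  inv_mem' := by
    rintro f ⟨k, hk, l, hl, rfl⟩
    exact ⟨k⁻¹, K.inv_mem hk, l⁻¹, L.inv_mem hl, Equiv.ext fun x => rfl⟩

/-- Given an enumeration (via `sIdx`) of the orbits of `K` on `Γ^m` by `Fin a`,
and `α ∈ Ω^m` with `Ω = Γ^d` viewed as a `d × m` matrix with rows `α[i] = (j ↦ α j i)`,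
`piClasses sIdx α` is the ordered partition `Π(α)` of `Δ = Fin d` whose `ℓ`-th class
consists of the `i` whose row `α[i]` lies in the orbit with the `ℓ`-th smallest
occurring index. -/
def piClasses {Γ : Type*} {d m a : ℕ} (sIdx : (Fin m → Γ) → Fin a)
    (α : Fin m → (Fin d → Γ)) : List (Set (Fin d)) :=
  ((Finset.univ.image fun i : Fin d => sIdx fun j => α j i).sort (· ≤ ·)).map
    fun t => {i : Fin d | sIdx (fun j => α j i) = t}


open Equiv MulAction Pointwise

/-- The largest subgroup whose orbits on `X` coincide with those of `G`. -/
def maxSub {Ω X : Type*} [MulAction (Equiv.Perm Ω) X] (G : Subgroup (Equiv.Perm Ω)) :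
    Subgroup (Equiv.Perm Ω) where
  carrier := {f | ∀ x : X, f • x ∈ MulAction.orbit G x}
  one_mem' := fun x => by simpa using MulAction.mem_orbit_self x
  mul_mem' := by
    intro f h hf hh x
    have h1 : (f * h) • x = f • (h • x) := mul_smul f h x
    have h2 : MulAction.orbit G (h • x) = MulAction.orbit G x :=
      MulAction.orbit_eq_iff.mpr (hh x)
    rw [h1, ← h2]
    exact hf (h • x)
  inv_mem' := by
    intro f hf x
    obtain ⟨g, hg⟩ := hf (f⁻¹ • x)
    have hg' : (g : Equiv.Perm Ω) • f⁻¹ • x = f • f⁻¹ • x := hg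
    rw [smul_inv_smul] at hg'
    have : f⁻¹ • x = g⁻¹ • x := by
      rw [eq_inv_smul_iff]
      exact hg'
    rw [this]
    exact ⟨g⁻¹, rfl⟩

theorem mem_maxSub_iff {Ω X : Type*} [MulAction (Equiv.Perm Ω) X]
    {G : Subgroup (Equiv.Perm Ω)} {f : Equiv.Perm Ω} :
    f ∈ maxSub (X := X) G ↔ ∀ x : X, f • x ∈ MulAction.orbit G x := Iff.rfl

theorem orbit_mono' {Ω X : Type*} [MulAction (Equiv.Perm Ω) X]
    {G H : Subgroup (Equiv.Perm Ω)} (hGH : G ≤ H) (x : X) :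
    MulAction.orbit G x ⊆ MulAction.orbit H x := by
  rintro y ⟨g, rfl⟩
  exact ⟨⟨g.1, hGH g.2⟩, rfl⟩

theorem sSup_eq_maxSub {Ω X : Type*} [MulAction (Equiv.Perm Ω) X]
    (G : Subgroup (Equiv.Perm Ω)) :
    sSup {H : Subgroup (Equiv.Perm Ω) |
      ∀ x : X, MulAction.orbit H x = MulAction.orbit G x} = maxSub (X := X) G := by
  apply le_antisymm
  · apply sSup_le
    intro H hH f hf x
    have : f • x ∈ MulAction.orbit H x := ⟨⟨f, hf⟩, rfl⟩
    rwa [hH x] at this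
  · apply le_sSup
    intro x
    apply le_antisymm
    · rintro y ⟨g, rfl⟩
      exact g.2 x
    · refine orbit_mono' (fun g hg => ?_) x
      intro y
      exact ⟨⟨g, hg⟩, rfl⟩

theorem mem_mClosure_iff {Ω : Type*} {m : ℕ} {G : Subgroup (Equiv.Perm Ω)}
    {f : Equiv.Perm Ω} :
    f ∈ mClosure m G ↔ ∀ α : Fin m → Ω, f • α ∈ MulAction.orbit G α := by
  rw [mClosure, sSup_eq_maxSub]; rfl

theorem mem_partClosure_iff {Ω : Type*} {m : ℕ} {G : Subgroup (Equiv.Perm Ω)}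
    {f : Equiv.Perm Ω} :
    f ∈ partClosure m G ↔
      ∀ P : OrderedPartition Ω m, f • P ∈ MulAction.orbit G P := by
  rw [partClosure, sSup_eq_maxSub]; rfl

theorem mem_orbit_perm_iff {Ω' : Type*} {m : ℕ} (K : Subgroup (Equiv.Perm Ω'))
    (ρ β : Fin m → Ω') :
    β ∈ MulAction.orbit K ρ ↔ ∃ k ∈ K, ∀ j, k (ρ j) = β j := by
  constructor
  · rintro ⟨k, rfl⟩
    exact ⟨k.1, k.2, fun j => rfl⟩
  · rintro ⟨k, hk, h⟩
    exact ⟨⟨k, hk⟩, funext h⟩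

theorem mem_orbit_wreath_iff {Γ : Type*} {d m : ℕ} (K : Subgroup (Equiv.Perm Γ))
    (L : Subgroup (Equiv.Perm (Fin d))) {α β : Fin m → (Fin d → Γ)} :
    β ∈ MulAction.orbit (wreathProduct K L) α ↔
      ∃ σ ∈ L, ∀ i : Fin d,
        (fun j => β j i) ∈ MulAction.orbit K (fun j => α j (σ⁻¹ i)) := by
  constructor
  · rintro ⟨g, rfl⟩
    obtain ⟨gs, σ, hgs, hσ, hg⟩ := g.2
    refine ⟨σ, hσ, fun i => ?_⟩
    rw [mem_orbit_perm_iff]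
    refine ⟨gs (σ⁻¹ i), hgs _, fun j => ?_⟩
    show gs (σ⁻¹ i) (α j (σ⁻¹ i)) = (g.1 • α) j i
    have : (g.1 • α) j i = g.1 (α j) i := rfl
    rw [this, hg, wreathElem_apply]
  · rintro ⟨σ, hσ, h⟩
    choose k hkK hk using fun i => (mem_orbit_perm_iff K _ _).mp (h i)
    refine ⟨⟨wreathElem (fun i' => k (σ i')) σ,
      ⟨_, σ, fun i' => hkK _, hσ, rfl⟩⟩, ?_⟩
    funext j
    funext i
    show wreathElem (fun i' => k (σ i')) σ (α j) i = β j i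
    rw [wreathElem_apply]
    simpa [show σ (σ⁻¹ i) = i from Equiv.apply_symm_apply σ i] using hk i j

section Hamming

variable {Γ : Type*} {d : ℕ}

open scoped Classical in
/-- The set of coordinates where two tuples differ. -/
noncomputable def diffs (ω ω' : Fin d → Γ) : Finset (Fin d) :=
  Finset.univ.filter fun c => ω c ≠ ω' c

theorem mem_diffs {ω ω' : Fin d → Γ} {c : Fin d} : c ∈ diffs ω ω' ↔ ω c ≠ ω' c := by
  simp [diffs]

theorem diffs_comm (ω ω' : Fin d → Γ) : diffs ω ω' = diffs ω' ω := by
  ext c; simp [mem_diffs, ne_comm]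

theorem eq_of_diffs_eq_empty {ω ω' : Fin d → Γ} (h : diffs ω ω' = ∅) : ω = ω' := by
  funext c
  by_contra hc
  exact absurd (h ▸ mem_diffs.mpr hc) (Finset.notMem_empty c)

theorem diffs_eq_singleton_iff {ω ω' : Fin d → Γ} {j : Fin d} :
    diffs ω ω' = {j} ↔ ∀ c, ω c ≠ ω' c ↔ c = j := by
  rw [Finset.ext_iff]
  simp [mem_diffs]

theorem apply_eq_of_diffs {ω ω' : Fin d → Γ} {j : Fin d} (h : diffs ω ω' = {j})
    {c : Fin d} (hc : c ≠ j) : ω c = ω' c := by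
  by_contra hne
  exact hc ((diffs_eq_singleton_iff.mp h c).mp hne)

theorem apply_ne_of_diffs {ω ω' : Fin d → Γ} {j : Fin d} (h : diffs ω ω' = {j}) :
    ω j ≠ ω' j := by
  have := h ▸ (Finset.mem_singleton_self j)
  exact mem_diffs.mp this

theorem diffs_update {ω : Fin d → Γ} {i : Fin d} {γ : Γ} (hγ : γ ≠ ω i) :
    diffs ω (Function.update ω i γ) = {i} := by
  rw [diffs_eq_singleton_iff]
  intro c
  constructor
  · intro hc
    by_contra h
    exact hc (Function.update_of_ne h γ ω).symm
  · rintro rfl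
    rw [Function.update_self]
    exact fun h => hγ h.symm

variable (g : Equiv.Perm (Fin d → Γ))
variable (hg : ∀ ω ω' : Fin d → Γ, (diffs (g ω) (g ω')).card = (diffs ω ω').card)

include hg

theorem exists_dir {ω x : Fin d → Γ} {i : Fin d} (h : diffs ω x = {i}) :
    ∃ j, diffs (g ω) (g x) = {j} := by
  apply Finset.card_eq_one.mp
  rw [hg, h, Finset.card_singleton]

theorem dir_unique {ω x x' : Fin d → Γ} {i j j' : Fin d}
    (hx : diffs ω x = {i}) (hx' : diffs ω x' = {i})
    (hj : diffs (g ω) (g x) = {j}) (hj' : diffs (g ω) (g x') = {j'}) : j = j' := by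
  by_cases hxx : x = x'
  · subst hxx
    rw [hj] at hj'
    exact Finset.singleton_injective hj'
  · have hdxx : diffs x x' = {i} := by
      rw [diffs_eq_singleton_iff]
      intro c
      constructor
      · intro hc
        by_contra h
        exact hc ((apply_eq_of_diffs hx h).symm.trans (apply_eq_of_diffs hx' h))
      · intro hci h
        apply hxx
        funext c'
        by_cases hc' : c' = i
        · subst hc'
          subst hci
          exact h
        · exact (apply_eq_of_diffs hx hc').symm.trans (apply_eq_of_diffs hx' hc')
    by_contra hne
    have hcard : (diffs (g x) (g x')).card = 1 := by
      rw [hg, hdxx, Finset.card_singleton]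
    have hjmem : j ∈ diffs (g x) (g x') := by
      rw [mem_diffs]
      intro h
      exact apply_ne_of_diffs hj ((apply_eq_of_diffs hj' hne).trans h.symm)
    have hj'mem : j' ∈ diffs (g x) (g x') := by
      rw [mem_diffs]
      intro h
      refine apply_ne_of_diffs hj' ?_
      have h1 : g ω j' = g x j' := apply_eq_of_diffs hj (fun hh => hne hh.symm)
      exact h1.trans h
    have : ({j, j'} : Finset (Fin d)) ⊆ diffs (g x) (g x') := by
      intro c hc
      rcases Finset.mem_insert.mp hc with rfl | hc
      · exact hjmem
      · exact (Finset.mem_singleton.mp hc) ▸ hj'mem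
    have h2 : ({j, j'} : Finset (Fin d)).card = 2 := by
      rw [Finset.card_insert_of_notMem (by simpa using hne), Finset.card_singleton]
    have := Finset.card_le_card this
    omega

theorem exists_dir_all [Nontrivial Γ] (ω : Fin d → Γ) (i : Fin d) :
    ∃ j, ∀ x, diffs ω x = {i} → diffs (g ω) (g x) = {j} := by
  obtain ⟨γ, hγ⟩ := exists_ne (ω i)
  have hx₀ : diffs ω (Function.update ω i γ) = {i} := diffs_update hγ
  obtain ⟨j, hj⟩ := exists_dir g hg hx₀
  refine ⟨j, fun x hx => ?_⟩
  obtain ⟨j', hj'⟩ := exists_dir g hg hx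
  rw [hj', dir_unique g hg hx hx₀ hj' hj]

end Hamming

section Hamming2

variable {Γ : Type*} {d : ℕ}
variable (g : Equiv.Perm (Fin d → Γ))
variable (hg : ∀ ω ω' : Fin d → Γ, (diffs (g ω) (g ω')).card = (diffs ω ω').card)
variable (D : (Fin d → Γ) → Fin d → Fin d)
variable (hD : ∀ ω i x, diffs ω x = {i} → diffs (g ω) (g x) = {D ω i})

theorem diffs_update_erase {ω ω' : Fin d → Γ} {c : Fin d} :
    diffs (Function.update ω c (ω' c)) ω' = (diffs ω ω').erase c := by
  classical
  ext e
  by_cases he : e = c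
  · subst he
    simp [mem_diffs, Function.update_self]
  · simp [mem_diffs, Finset.mem_erase, he, Function.update_of_ne he]

include hg hD

theorem D_inj [Nontrivial Γ] (ω : Fin d → Γ) : Function.Injective (D ω) := by
  classical
  intro i i' heq
  by_contra hne
  obtain ⟨γ, hγ⟩ := exists_ne (ω i)
  obtain ⟨γ', hγ'⟩ := exists_ne (ω i')
  set x := Function.update ω i γ with hxdef
  set x' := Function.update ω i' γ' with hx'def
  have hx : diffs ω x = {i} := diffs_update (fun h => hγ h)
  have hx' : diffs ω x' = {i'} := diffs_update (fun h => hγ' h)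
  have hgx := hD ω i x hx
  have hgx' := hD ω i' x' hx'
  have hxx' : diffs x x' = {i, i'} := by
    ext c
    rw [mem_diffs, Finset.mem_insert, Finset.mem_singleton]
    by_cases hci : c = i
    · subst hci
      rw [hxdef, hx'def]
      simp only [Function.update_self, Function.update_of_ne hne, hne,
        or_false, iff_true, eq_self_iff_true, true_or]
      first
      | exact fun h => hγ h.symm
      | exact fun h => hγ h
      | (constructor
         · intro _; left; rfl
         · intro _ h; exact hγ h.symm)
    · by_cases hci' : c = i'
      · subst hci'
        rw [hxdef, hx'def]
        have hne' : c ≠ i := hci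
        simp only [Function.update_self, Function.update_of_ne hne',
          or_true, iff_true, eq_self_iff_true]
        first
        | exact fun h => hγ' h.symm
        | exact fun h => hγ' h
        | (constructor
           · intro _; right; rfl
           · intro _ h; exact hγ' h.symm)
      · rw [hxdef, hx'def]
        simp [Function.update_of_ne hci, Function.update_of_ne hci', hci, hci']
  have hcard : (diffs (g x) (g x')).card = 2 := by
    rw [hg, hxx', Finset.card_insert_of_notMem (by simpa using hne),
      Finset.card_singleton]
  have hsub : diffs (g x) (g x') ⊆ {D ω i} := by
    intro e he
    rw [mem_diffs] at he
    rw [Finset.mem_singleton]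
    by_contra hedi
    apply he
    have h1 : g x e = g ω e := (apply_eq_of_diffs hgx hedi).symm
    have h2 : g ω e = g x' e := apply_eq_of_diffs hgx' (heq ▸ hedi)
    exact h1.trans h2
  have := Finset.card_le_card hsub
  rw [Finset.card_singleton] at this
  omega

theorem D_const [Nontrivial Γ] (n : ℕ) :
    ∀ ω ω' : Fin d → Γ, (diffs ω ω').card = n → ∀ i, D ω i = D ω' i := by
  classical
  induction n using Nat.strong_induction_on with
  | _ n IH =>
  intro ω ω' hn i
  rcases Nat.eq_zero_or_pos n with h0 | hpos
  · subst h0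
    rw [eq_of_diffs_eq_empty (Finset.card_eq_zero.mp hn)]
  · obtain ⟨i₀, hi₀⟩ := Finset.card_pos.mp (by omega : 0 < (diffs ω ω').card)
    have hne0 : ω i₀ ≠ ω' i₀ := mem_diffs.mp hi₀
    set ω'' := Function.update ω i₀ (ω' i₀) with hω''def
    have h1 : diffs ω ω'' = {i₀} := diffs_update (fun h => hne0 h.symm)
    have h2 : diffs ω'' ω' = (diffs ω ω').erase i₀ := diffs_update_erase
    have hcard2 : (diffs ω'' ω').card = n - 1 := by
      rw [h2, Finset.card_erase_of_mem hi₀, hn]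
    have step2 : ∀ i', D ω'' i' = D ω' i' :=
      fun i' => IH (n - 1) (by omega) ω'' ω' hcard2 i'
    have step1 : D ω i = D ω'' i := by
      by_cases hii : i = i₀
      · subst hii
        have hA := hD ω i ω'' h1
        have hB := hD ω'' i ω (by rw [diffs_comm]; exact h1)
        rw [diffs_comm] at hB
        rw [hA] at hB
        exact Finset.singleton_injective hB
      · obtain ⟨γ, hγ⟩ := exists_ne (ω i)
        set x := Function.update ω i γ with hxdef
        set x'' := Function.update ω'' i γ with hx''def
        have hω''i : ω'' i = ω i := Function.update_of_ne hii _ _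
        have hωx : diffs ω x = {i} := diffs_update (fun h => hγ h)
        have hx'' : diffs ω'' x'' = {i} :=
          diffs_update (fun h => hγ (hω''i ▸ h))
        have hxx'' : diffs x x'' = {i₀} := by
          rw [diffs_eq_singleton_iff]
          intro c
          constructor
          · intro hc
            by_contra hcc
            apply hc
            by_cases hci : c = i
            · subst hci
              rw [hxdef, hx''def, Function.update_self, Function.update_self]
            · rw [hxdef, hx''def, Function.update_of_ne hci,
                Function.update_of_ne hci, hω''def, Function.update_of_ne hcc]
          · intro hc
            subst hc
            rw [hxdef, hx''def, Function.update_of_ne (Ne.symm hii),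
              Function.update_of_ne (Ne.symm hii), hω''def, Function.update_self]
            exact hne0
        have hj := hD ω i x hωx
        have hj'' := hD ω'' i x'' hx''
        have ha := hD ω i₀ ω'' h1
        have hb := hD x i₀ x'' hxx''
        by_contra hne
        have hxω'' : x ≠ ω'' := by
          intro h
          apply hγ
          rw [← hω''i, ← h, hxdef, Function.update_self]
        have hx''ω : x'' ≠ ω := by
          intro h
          apply hγ
          rw [← h, hx''def, Function.update_self]
        by_cases haj : D ω i₀ = D ω i
        · -- b = j'' and g x = g ω''
          have hmem : g x (D ω'' i) ≠ g x'' (D ω'' i) := by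
            have e1 : g x (D ω'' i) = g ω (D ω'' i) :=
              (apply_eq_of_diffs hj (fun h : D ω'' i = D ω i => hne h.symm)).symm
            have e2 : g ω (D ω'' i) = g ω'' (D ω'' i) :=
              apply_eq_of_diffs ha (fun h : D ω'' i = D ω i₀ => hne (haj ▸ h).symm)
            rw [e1, e2]
            exact apply_ne_of_diffs hj''
          have hbj'' : D x i₀ = D ω'' i := by
            have := mem_diffs.mpr hmem
            rw [hb, Finset.mem_singleton] at this
            exact this.symm
          apply hxω''
          apply g.injective
          funext c
          by_cases hc : c = D ω'' i
          · have e1 : g x c = g ω c :=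
              (apply_eq_of_diffs hj (fun h : c = D ω i => hne (hc.symm.trans h).symm)).symm
            have e2 : g ω c = g ω'' c :=
              apply_eq_of_diffs ha
                (fun h : c = D ω i₀ => hne ((hc.symm.trans h).trans haj).symm)
            rw [e1, e2]
          · have e1 : g x c = g x'' c := apply_eq_of_diffs hb (hbj'' ▸ hc)
            have e2 : g x'' c = g ω'' c := (apply_eq_of_diffs hj'' hc).symm
            rw [e1, e2]
        · by_cases haj'' : D ω i₀ = D ω'' i
          · -- b = j and g ω = g x''
            have hmem : g x (D ω i) ≠ g x'' (D ω i) := by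
              have e2 : g ω (D ω i) = g ω'' (D ω i) :=
                apply_eq_of_diffs ha (fun h : D ω i = D ω i₀ => haj h.symm)
              have e3 : g ω'' (D ω i) = g x'' (D ω i) :=
                apply_eq_of_diffs hj'' (fun h : D ω i = D ω'' i => hne h)
              intro h
              exact apply_ne_of_diffs hj (by rw [e2, e3, ← h])
            have hbj : D x i₀ = D ω i := by
              have := mem_diffs.mpr hmem
              rw [hb, Finset.mem_singleton] at this
              exact this.symm
            apply hx''ω
            apply g.injective
            funext c
            by_cases hc : c = D ω i
            · have e1 : g x'' c = g ω'' c :=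
                (apply_eq_of_diffs hj'' (fun h : c = D ω'' i => hne (hc.symm.trans h))).symm
              have e2 : g ω'' c = g ω c :=
                (apply_eq_of_diffs ha (fun h : c = D ω i₀ => haj (h.symm.trans hc))).symm
              rw [e1, e2]
            · have e1 : g x'' c = g x c := (apply_eq_of_diffs hb (hbj ▸ hc)).symm
              have e2 : g x c = g ω c := (apply_eq_of_diffs hj hc).symm
              rw [e1, e2]
          · -- a ∉ {j, j''} : contradiction via b = a and b = j
            have hamem : g x (D ω i₀) ≠ g x'' (D ω i₀) := by
              have e1 : g x (D ω i₀) = g ω (D ω i₀) :=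
                (apply_eq_of_diffs hj (fun h : D ω i₀ = D ω i => haj h)).symm
              have e3 : g ω'' (D ω i₀) = g x'' (D ω i₀) :=
                apply_eq_of_diffs hj'' (fun h : D ω i₀ = D ω'' i => haj'' h)
              rw [e1, ← e3]
              exact apply_ne_of_diffs ha
            have hjmem : g x (D ω i) ≠ g x'' (D ω i) := by
              have e2 : g ω (D ω i) = g ω'' (D ω i) :=
                apply_eq_of_diffs ha (fun h : D ω i = D ω i₀ => haj h.symm)
              have e3 : g ω'' (D ω i) = g x'' (D ω i) :=
                apply_eq_of_diffs hj'' (fun h : D ω i = D ω'' i => hne h)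
              intro h
              exact apply_ne_of_diffs hj (by rw [e2, e3, ← h])
            have h1 : D ω i₀ = D x i₀ := by
              have := mem_diffs.mpr hamem
              rw [hb, Finset.mem_singleton] at this
              exact this
            have h2 : D ω i = D x i₀ := by
              have := mem_diffs.mpr hjmem
              rw [hb, Finset.mem_singleton] at this
              exact this
            exact haj (h1.trans h2.symm)
    rw [step1, step2]

end Hamming2

section Hamming3

variable {Γ : Type*} {d : ℕ}
variable (g : Equiv.Perm (Fin d → Γ))
variable (hg : ∀ ω ω' : Fin d → Γ, (diffs (g ω) (g ω')).card = (diffs ω ω').card)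
variable (D : (Fin d → Γ) → Fin d → Fin d)
variable (hD : ∀ ω i x, diffs ω x = {i} → diffs (g ω) (g x) = {D ω i})

include hg hD

theorem coord_agree [Nontrivial Γ] (ω₀ : Fin d → Γ) (n : ℕ) :
    ∀ ω ω' : Fin d → Γ, (diffs ω ω').card = n → ∀ i, ω i = ω' i →
      g ω (D ω₀ i) = g ω' (D ω₀ i) := by
  classical
  induction n using Nat.strong_induction_on with
  | _ n IH =>
  intro ω ω' hn i hi
  rcases Nat.eq_zero_or_pos n with h0 | hpos
  · subst h0
    rw [eq_of_diffs_eq_empty (Finset.card_eq_zero.mp hn)]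
  · obtain ⟨c, hc⟩ := Finset.card_pos.mp (by omega : 0 < (diffs ω ω').card)
    have hnec : ω c ≠ ω' c := mem_diffs.mp hc
    have hci : c ≠ i := fun h => hnec (h ▸ hi)
    set ω'' := Function.update ω c (ω' c) with hω''def
    have h1 : diffs ω ω'' = {c} := diffs_update (fun h => hnec h.symm)
    have hgd : diffs (g ω) (g ω'') = {D ω c} := hD ω c ω'' h1
    have hDc : D ω c = D ω₀ c := D_const g hg D hD (diffs ω ω₀).card ω ω₀ rfl c
    have hDne : D ω₀ i ≠ D ω₀ c := fun h => hci (D_inj g hg D hD ω₀ h).symm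
    have e1 : g ω (D ω₀ i) = g ω'' (D ω₀ i) :=
      apply_eq_of_diffs hgd (by rw [hDc]; exact hDne)
    have h2 : diffs ω'' ω' = (diffs ω ω').erase c := diffs_update_erase
    have hcard2 : (diffs ω'' ω').card = n - 1 := by
      rw [h2, Finset.card_erase_of_mem hc, hn]
    have hω''i : ω'' i = ω' i := by
      rw [hω''def, Function.update_of_ne hci.symm]
      exact hi
    have e2 : g ω'' (D ω₀ i) = g ω' (D ω₀ i) :=
      IH (n - 1) (by omega) ω'' ω' hcard2 i hω''i
    rw [e1, e2]

end Hamming3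

/-- **Structure theorem**: a Hamming-distance preserving permutation of `Γ^d`
belongs to `Sym(Γ) ↑ Sym(d)`, i.e. is a `wreathElem`. -/
theorem exists_wreathElem_of_isometry {Γ : Type*} [Finite Γ] [Nontrivial Γ] {d : ℕ}
    (g : Equiv.Perm (Fin d → Γ))
    (hg : ∀ ω ω' : Fin d → Γ, (diffs (g ω) (g ω')).card = (diffs ω ω').card) :
    ∃ (fs : Fin d → Equiv.Perm Γ) (τ : Equiv.Perm (Fin d)), g = wreathElem fs τ := by
  classical
  choose D hD using fun (ω : Fin d → Γ) (i : Fin d) => exists_dir_all g hg ω i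
  have hD' : ∀ ω i x, diffs ω x = {i} → diffs (g ω) (g x) = {D ω i} :=
    fun ω i x hx => hD ω i x hx
  have hΓ : Nonempty Γ := inferInstance
  let ω₀ : Fin d → Γ := fun _ => Classical.arbitrary Γ
  have hinj : Function.Injective (D ω₀) := D_inj g hg D hD' ω₀
  have hbij : Function.Bijective (D ω₀) := Finite.injective_iff_bijective.mp hinj
  let τ : Equiv.Perm (Fin d) := Equiv.ofBijective (D ω₀) hbij
  have hτ : ∀ i, τ i = D ω₀ i := fun i => rfl
  let F : Fin d → Γ → Γ := fun i γ => g (Function.update ω₀ i γ) (D ω₀ i)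
  have hFinj : ∀ i, Function.Injective (F i) := by
    intro i γ γ' hFe
    by_contra hne
    have hd1 : diffs (Function.update ω₀ i γ) (Function.update ω₀ i γ') = {i} := by
      rw [diffs_eq_singleton_iff]
      intro c
      constructor
      · intro hcc
        by_contra h
        exact hcc (by rw [Function.update_of_ne h, Function.update_of_ne h])
      · intro h
        subst h
        rw [Function.update_self, Function.update_self]
        exact hne
    have := hD' (Function.update ω₀ i γ) i (Function.update ω₀ i γ') hd1
    have hDu : D (Function.update ω₀ i γ) i = D ω₀ i :=
      D_const g hg D hD' _ _ ω₀ rfl i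
    rw [hDu] at this
    exact apply_ne_of_diffs this hFe
  let fs : Fin d → Equiv.Perm Γ := fun i =>
    Equiv.ofBijective (F i) (Finite.injective_iff_bijective.mp (hFinj i))
  refine ⟨fs, τ, ?_⟩
  apply Equiv.ext
  intro ω
  funext c
  rw [wreathElem_apply]
  have hfs : fs (τ⁻¹ c) (ω (τ⁻¹ c)) =
      g (Function.update ω₀ (τ⁻¹ c) (ω (τ⁻¹ c))) (D ω₀ (τ⁻¹ c)) := rfl
  have hcoord : g (Function.update ω₀ (τ⁻¹ c) (ω (τ⁻¹ c))) (D ω₀ (τ⁻¹ c)) =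
      g ω (D ω₀ (τ⁻¹ c)) :=
    coord_agree g hg D hD' ω₀ _ _ ω rfl (τ⁻¹ c) (Function.update_self _ _ _)
  have hτc : D ω₀ (τ⁻¹ c) = c := by
    have := Equiv.apply_symm_apply τ c
    rw [← hτ (τ⁻¹ c)]
    exact this
  rw [hfs, hcoord, hτc]

theorem card_diffs_wreathElem {Γ : Type*} {d : ℕ} (gs : Fin d → Equiv.Perm Γ)
    (σ : Equiv.Perm (Fin d)) (ω ω' : Fin d → Γ) :
    (diffs (wreathElem gs σ ω) (wreathElem gs σ ω')).card = (diffs ω ω').card := by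
  have : diffs (wreathElem gs σ ω) (wreathElem gs σ ω')
      = (diffs ω ω').map σ.toEmbedding := by
    ext c
    rw [Finset.mem_map_equiv, mem_diffs, mem_diffs, wreathElem_apply, wreathElem_apply]
    constructor
    · intro h hc
      exact h (by rw [show σ.symm c = σ⁻¹ c from rfl] at hc; rw [hc])
    · intro h hc
      exact h (by rw [show σ.symm c = σ⁻¹ c from rfl]; exact (gs (σ⁻¹ c)).injective hc)
  rw [this, Finset.card_map]

theorem card_diffs_of_mem_mClosure {Γ : Type*} {d m : ℕ}
    {K : Subgroup (Equiv.Perm Γ)} {L : Subgroup (Equiv.Perm (Fin d))}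
    (hm : 2 ≤ m) {f : Equiv.Perm (Fin d → Γ)}
    (hf : f ∈ mClosure m (wreathProduct K L)) (ω ω' : Fin d → Γ) :
    (diffs (f ω) (f ω')).card = (diffs ω ω').card := by
  classical
  set j0 : Fin m := ⟨0, by omega⟩ with hj0
  set j1 : Fin m := ⟨1, by omega⟩ with hj1
  set α : Fin m → (Fin d → Γ) := fun j => if j = j0 then ω else ω' with hα
  obtain ⟨g, hgα⟩ := mem_mClosure_iff.mp hf α
  obtain ⟨gs, σ, hgs, hσ, hgw⟩ := g.2
  have hβ0 : f ω = wreathElem gs σ ω := by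
    have h0 : (g.1 • α) j0 = (f • α) j0 := congrFun hgα j0
    have e1 : (g.1 • α) j0 = g.1 (α j0) := rfl
    have e2 : (f • α) j0 = f (α j0) := rfl
    rw [e1, e2] at h0
    rw [hα] at h0
    simp only [eq_self_iff_true, if_true] at h0
    rw [← h0, hgw]
  have hβ1 : f ω' = wreathElem gs σ ω' := by
    have h1 : (g.1 • α) j1 = (f • α) j1 := congrFun hgα j1
    have e1 : (g.1 • α) j1 = g.1 (α j1) := rfl
    have e2 : (f • α) j1 = f (α j1) := rfl
    rw [e1, e2] at h1
    rw [hα] at h1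
    have hne : j1 ≠ j0 := by
      rw [hj0, hj1]
      intro h
      exact absurd (congrArg Fin.val h) (by simp)
    simp only [if_neg hne] at h1
    rw [← h1, hgw]
  rw [hβ0, hβ1, card_diffs_wreathElem]

theorem exists_orbIdx {Γ : Type*} [Fintype Γ] {m : ℕ} (K : Subgroup (Equiv.Perm Γ)) :
    ∃ sIdx : (Fin m → Γ) → Fin (numOrbits m K),
      ∀ ρ ρ', (sIdx ρ = sIdx ρ' ↔ MulAction.orbit K ρ = MulAction.orbit K ρ') := by
  classical
  letI : Fintype (MulAction.orbitRel.Quotient K (Fin m → Γ)) := Fintype.ofFinite _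
  have hcard : Fintype.card (MulAction.orbitRel.Quotient K (Fin m → Γ)) = numOrbits m K :=
    Nat.card_eq_fintype_card.symm
  let e : MulAction.orbitRel.Quotient K (Fin m → Γ) ≃ Fin (numOrbits m K) :=
    (Fintype.equivFin _).trans (finCongr hcard)
  refine ⟨fun ρ => e (Quotient.mk'' ρ), fun ρ ρ' => ?_⟩
  rw [Equiv.apply_eq_iff_eq, Quotient.eq'']
  constructor
  · intro h
    exact MulAction.orbit_eq_iff.mpr (MulAction.orbitRel_apply.mp h)
  · intro h
    exact MulAction.orbitRel_apply.mpr (MulAction.orbit_eq_iff.mp h)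

theorem comp_mem_mClosure {Γ : Type*} {d m : ℕ}
    {K : Subgroup (Equiv.Perm Γ)} {L : Subgroup (Equiv.Perm (Fin d))}
    {f : Equiv.Perm (Fin d → Γ)} (hf : f ∈ mClosure m (wreathProduct K L))
    {fs : Fin d → Equiv.Perm Γ} {τ : Equiv.Perm (Fin d)} (hrep : f = wreathElem fs τ)
    (i : Fin d) : fs i ∈ mClosure m K := by
  rw [mem_mClosure_iff]
  intro ρ
  set α : Fin m → Fin d → Γ := fun j _ => ρ j with hα
  have h := mem_mClosure_iff.mp hf α
  rw [mem_orbit_wreath_iff] at h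
  obtain ⟨σ, hσ, hrows⟩ := h
  have hr := hrows (τ i)
  have e1 : (fun j => (f • α) j (τ i)) = fs i • ρ := by
    funext j
    show f (α j) (τ i) = fs i (ρ j)
    rw [hrep, wreathElem_apply, show τ⁻¹ (τ i) = i from Equiv.symm_apply_apply τ i]
  have e2 : (fun j => α j (σ⁻¹ (τ i))) = ρ := rfl
  rw [e1, e2] at hr
  exact hr

theorem tau_mem_partClosure {Γ : Type*} [Fintype Γ] {d m : ℕ}
    {K : Subgroup (Equiv.Perm Γ)} {L : Subgroup (Equiv.Perm (Fin d))}
    {f : Equiv.Perm (Fin d → Γ)} (hf : f ∈ mClosure m (wreathProduct K L))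
    {fs : Fin d → Equiv.Perm Γ} {τ : Equiv.Perm (Fin d)} (hrep : f = wreathElem fs τ) :
    τ ∈ partClosure (min (numOrbits m K) d) L := by
  classical
  rw [mem_partClosure_iff]
  intro P
  set c := P.classes.length with hc
  have hcle : c ≤ numOrbits m K := le_trans P.length_le (min_le_left _ _)
  letI : Fintype (MulAction.orbitRel.Quotient K (Fin m → Γ)) := Fintype.ofFinite _
  have hcard : c ≤ Fintype.card (MulAction.orbitRel.Quotient K (Fin m → Γ)) := by
    rw [← Nat.card_eq_fintype_card]
    exact hcle
  obtain ⟨e⟩ : Nonempty (Fin c ↪ MulAction.orbitRel.Quotient K (Fin m → Γ)) :=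
    Function.Embedding.nonempty_iff_card_le.mpr (by simpa using hcard)
  set ρ : Fin c → (Fin m → Γ) := fun t => (e t).out with hρ
  have hρorb : ∀ t t' : Fin c,
      MulAction.orbit K (ρ t) = MulAction.orbit K (ρ t') → t = t' := by
    intro t t' h
    apply e.injective
    have h2 : (⟦ρ t⟧ : MulAction.orbitRel.Quotient K (Fin m → Γ)) = ⟦ρ t'⟧ :=
      Quotient.sound (MulAction.orbitRel_apply.mpr (MulAction.orbit_eq_iff.mp h))
    rw [hρ] at h2
    rwa [Quotient.out_eq, Quotient.out_eq] at h2
  have hcov : ∀ i : Fin d, ∃ t : Fin c, i ∈ P.classes.get t := by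
    intro i
    obtain ⟨s, hs, his⟩ := P.covers i
    obtain ⟨t, ht⟩ := List.mem_iff_get.mp hs
    exact ⟨t, ht ▸ his⟩
  choose idx hidx using hcov
  have hdisj : ∀ t t' : Fin c, t ≠ t' →
      Disjoint (P.classes.get t) (P.classes.get t') := by
    have hp := List.pairwise_iff_get.mp P.pairwise_disjoint
    intro t t' hne
    rcases lt_or_gt_of_ne hne with h | h
    · exact hp t t' h
    · exact (hp t' t h).symm
  have huniq : ∀ (i : Fin d) (t : Fin c), i ∈ P.classes.get t → t = idx i := by
    intro i t ht
    by_contra hne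
    exact Set.disjoint_left.mp (hdisj t (idx i) hne) ht (hidx i)
  set α : Fin m → Fin d → Γ := fun j i => ρ (idx i) j with hα
  have h := mem_mClosure_iff.mp hf α
  rw [mem_orbit_wreath_iff] at h
  obtain ⟨σ, hσ, hrows⟩ := h
  have hkey : ∀ i : Fin d, idx (τ⁻¹ i) = idx (σ⁻¹ i) := by
    intro i
    have hr := hrows i
    have e2 : (fun j => α j (σ⁻¹ i)) = ρ (idx (σ⁻¹ i)) := rfl
    have e1 : (fun j => (f • α) j i) = fs (τ⁻¹ i) • ρ (idx (τ⁻¹ i)) := by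
      funext j
      show f (α j) i = fs (τ⁻¹ i) (ρ (idx (τ⁻¹ i)) j)
      rw [hrep, wreathElem_apply]
    rw [e1, e2] at hr
    have hmem : fs (τ⁻¹ i) • ρ (idx (τ⁻¹ i)) ∈
        MulAction.orbit K (ρ (idx (τ⁻¹ i))) :=
      mem_mClosure_iff.mp (comp_mem_mClosure hf hrep (τ⁻¹ i)) _
    exact hρorb _ _ ((MulAction.orbit_eq_iff.mpr hmem).symm.trans
      (MulAction.orbit_eq_iff.mpr hr))
  refine ⟨⟨σ, hσ⟩, ?_⟩
  show σ • P = τ • P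
  apply OrderedPartition.ext'
  rw [OrderedPartition.smul_classes, OrderedPartition.smul_classes]
  apply List.map_congr_left
  intro s hs
  obtain ⟨t, rfl⟩ := List.mem_iff_get.mp hs
  ext i
  rw [Set.mem_image_equiv, Set.mem_image_equiv]
  constructor
  · intro hmem
    have h1 : t = idx (σ⁻¹ i) := huniq _ t hmem
    have h2 : t = idx (τ⁻¹ i) := h1.trans (hkey i).symm
    rw [h2]
    exact hidx (τ⁻¹ i)
  · intro hmem
    have h1 : t = idx (τ⁻¹ i) := huniq _ t hmem
    have h2 : t = idx (σ⁻¹ i) := h1.trans (hkey i)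
    rw [h2]
    exact hidx (σ⁻¹ i)

theorem piClasses_partition {Γ : Type*} {d m a : ℕ} (sIdx : (Fin m → Γ) → Fin a)
    (α : Fin m → Fin d → Γ) :
    ∃ P : OrderedPartition (Fin d) (min a d), P.classes = piClasses sIdx α := by
  classical
  refine ⟨⟨piClasses sIdx α, ?_, ?_, ?_, ?_⟩, rfl⟩
  · rw [piClasses, List.length_map, Finset.length_sort]
    apply le_min
    · exact le_trans (Finset.card_le_univ _) (by simp)
    · exact le_trans Finset.card_image_le (by simp)
  · intro s hs
    rw [piClasses, List.mem_map] at hs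
    obtain ⟨t, ht, rfl⟩ := hs
    rw [Finset.mem_sort, Finset.mem_image] at ht
    obtain ⟨i, _, hi⟩ := ht
    exact ⟨i, hi⟩
  · rw [piClasses]
    refine List.Pairwise.map _ (fun t t' htt' => ?_) (Finset.sortedLT_sort _).pairwise
    refine Set.disjoint_left.mpr (fun {i} hit hit' => ?_)
    exact absurd (hit.symm.trans hit') (ne_of_lt htt')
  · intro i
    refine ⟨{i' : Fin d | sIdx (fun j => α j i') = sIdx (fun j => α j i)}, ?_, rfl⟩
    rw [piClasses]
    exact List.mem_map.mpr ⟨sIdx (fun j => α j i),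
      (Finset.mem_sort _).mpr (Finset.mem_image_of_mem _ (Finset.mem_univ i)), rfl⟩

theorem wreath_le_mClosure {Γ : Type*} [Fintype Γ] {d m : ℕ}
    (K : Subgroup (Equiv.Perm Γ)) (L : Subgroup (Equiv.Perm (Fin d))) :
    wreathProduct (mClosure m K) (partClosure (min (numOrbits m K) d) L) ≤
      mClosure m (wreathProduct K L) := by
  classical
  rintro f ⟨fs, τ, hfs, hτ, rfl⟩
  rw [mem_mClosure_iff]
  intro α
  obtain ⟨sIdx, hsIdx⟩ := exists_orbIdx (m := m) K
  obtain ⟨P, hP⟩ := piClasses_partition sIdx α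
  obtain ⟨σ, hσP⟩ := mem_partClosure_iff.mp hτ P
  have hσP' : (σ : Equiv.Perm (Fin d)) • P = τ • P := hσP
  have hclasses : P.classes.map (fun s => (σ : Equiv.Perm (Fin d)) '' s) =
      P.classes.map (fun s => τ '' s) := by
    rw [← OrderedPartition.smul_classes, ← OrderedPartition.smul_classes, hσP']
  have hkey : ∀ i : Fin d,
      sIdx (fun j => α j (τ⁻¹ i)) = sIdx (fun j => α j ((σ : Equiv.Perm (Fin d))⁻¹ i)) := by
    intro i
    set t := sIdx (fun j => α j (τ⁻¹ i)) with htdef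
    have hfib : ({i' : Fin d | sIdx (fun j => α j i') = t}) ∈ P.classes := by
      rw [hP, piClasses]
      refine List.mem_map.mpr ⟨t, (Finset.mem_sort _).mpr ?_, rfl⟩
      exact Finset.mem_image_of_mem _ (Finset.mem_univ (τ⁻¹ i))
    have him := List.map_eq_map_iff.mp hclasses _ hfib
    have hmem : i ∈ τ '' {i' : Fin d | sIdx (fun j => α j i') = t} := by
      rw [Set.mem_image_equiv]
      exact htdef.symm
    rw [← him, Set.mem_image_equiv] at hmem
    exact hmem.symm
  rw [mem_orbit_wreath_iff]
  refine ⟨(σ : Equiv.Perm (Fin d)), σ.2, fun i => ?_⟩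
  have e1 : (fun j => (wreathElem fs τ • α) j i) =
      fs (τ⁻¹ i) • (fun j => α j (τ⁻¹ i)) := by
    funext j
    show wreathElem fs τ (α j) i = fs (τ⁻¹ i) (α j (τ⁻¹ i))
    rw [wreathElem_apply]
  rw [e1]
  have hmem : fs (τ⁻¹ i) • (fun j => α j (τ⁻¹ i)) ∈
      MulAction.orbit K (fun j => α j (τ⁻¹ i)) :=
    mem_mClosure_iff.mp (hfs (τ⁻¹ i)) _
  have horb : MulAction.orbit K (fun j => α j (τ⁻¹ i)) =
      MulAction.orbit K (fun j => α j ((σ : Equiv.Perm (Fin d))⁻¹ i)) :=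
    (hsIdx _ _).mp (hkey i)
  rw [← horb]
  exact hmem


/-- **Theorem 1 (main theorem).** For `K ≤ Sym(Γ)`, `L ≤ Sym(Δ)` with `Δ = {1,…,d}` and
`m ≥ 2`: `(K↑L)^(m) = K^(m) ↑ L^[k]` where `k = min{k_m, d}` and `k_m = |orb_m(K)|`. -/
theorem mClosure_wreathProduct {Γ : Type*} [Fintype Γ] {d : ℕ}
    (K : Subgroup (Equiv.Perm Γ)) (L : Subgroup (Equiv.Perm (Fin d)))
    (m : ℕ) (hm : 2 ≤ m) :
    mClosure m (wreathProduct K L) =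
      wreathProduct (mClosure m K) (partClosure (min (numOrbits m K) d) L) := by

  classical
  rcases subsingleton_or_nontrivial (Fin d → Γ) with hsub | hnt
  · have hperm : ∀ x : Equiv.Perm (Fin d → Γ), x = 1 :=
      fun x => Equiv.ext fun ω => Subsingleton.elim _ _
    apply Subgroup.ext
    intro x
    rw [hperm x]
    simp only [one_mem]
  · have hΓ : Nontrivial Γ := by
      obtain ⟨x, y, hxy⟩ := hnt
      by_contra h
      rw [not_nontrivial_iff_subsingleton] at h
      exact hxy (funext fun i => Subsingleton.elim _ _)
    apply le_antisymm
    · intro f hf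
      have hdist := card_diffs_of_mem_mClosure hm hf
      obtain ⟨fs, τ, hrep⟩ := exists_wreathElem_of_isometry f hdist
      exact ⟨fs, τ, fun i => comp_mem_mClosure hf hrep i,
        tau_mem_partClosure hf hrep, hrep⟩
    · exact wreath_le_mClosure K L
end

section
/- Let Ω be a finite set, G ≤ Sym(Ω), and m a natural number. Then G^[m+1] ≤ G^(m). -/
open Equiv MulAction Pointwise

/-- The subgroup of permutations agreeing with some element of `G` on every `m`-tuple. -/
def pointwiseClosure {Ω : Type*} (m : ℕ) (G : Subgroup (Equiv.Perm Ω)) :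
    Subgroup (Equiv.Perm Ω) where
  carrier := {f | ∀ α : Fin m → Ω, ∃ g ∈ G, ∀ j, f (α j) = g (α j)}
  one_mem' := fun α => ⟨1, G.one_mem, fun _ => rfl⟩
  mul_mem' := by
    rintro f₁ f₂ h₁ h₂ α
    obtain ⟨g₂, hg₂, he₂⟩ := h₂ α
    obtain ⟨g₁, hg₁, he₁⟩ := h₁ (fun j => g₂ (α j))
    refine ⟨g₁ * g₂, G.mul_mem hg₁ hg₂, fun j => ?_⟩
    simp only [Equiv.Perm.mul_apply, he₂ j, he₁ j]
  inv_mem' := by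
    intro f hf α
    obtain ⟨g, hg, he⟩ := hf (fun j => f⁻¹ (α j))
    refine ⟨g⁻¹, G.inv_mem hg, fun j => ?_⟩
    have h1 : α j = g (f⁻¹ (α j)) := by
      have := he j
      simpa using this
    calc f⁻¹ (α j) = g⁻¹ (g (f⁻¹ (α j))) := by simp
      _ = g⁻¹ (α j) := by rw [← h1]

theorem le_pointwiseClosure {Ω : Type*} (m : ℕ) (G : Subgroup (Equiv.Perm Ω)) :
    G ≤ pointwiseClosure m G :=
  fun g hg _ => ⟨g, hg, fun _ => rfl⟩

theorem pointwiseClosure_mem {Ω : Type*} (m : ℕ) (G : Subgroup (Equiv.Perm Ω)) :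
    ∀ α : Fin m → Ω,
      MulAction.orbit (pointwiseClosure m G) α = MulAction.orbit G α := by
  intro α
  ext β
  constructor
  · rintro ⟨⟨f, hf⟩, rfl⟩
    obtain ⟨g, hg, he⟩ := hf α
    refine ⟨⟨g, hg⟩, ?_⟩
    funext j
    exact (he j).symm
  · rintro ⟨⟨g, hg⟩, rfl⟩
    exact ⟨⟨g, le_pointwiseClosure m G hg⟩, rfl⟩

theorem pointwiseClosure_le_mClosure {Ω : Type*} (m : ℕ) (G : Subgroup (Equiv.Perm Ω)) :
    pointwiseClosure m G ≤ mClosure m G :=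
  le_sSup (pointwiseClosure_mem m G)

/-- **Lemma.** `G^[m+1] ≤ G^(m)`. -/
theorem partClosure_le_mClosure {Ω : Type*} [Fintype Ω] (G : Subgroup (Equiv.Perm Ω))
    (m : ℕ) :
    partClosure (m + 1) G ≤ mClosure m G := by
  classical
  refine le_trans ?_ (pointwiseClosure_le_mClosure m G)
  refine sSup_le fun H hH => ?_
  intro f hf α
  -- construct the ordered partition from α
  set L : List Ω := (List.ofFn α).dedup with hL
  set C : Set Ω := (Set.range α)ᶜ with hC
  have hmemL : ∀ j, α j ∈ L := fun j =>
    List.mem_dedup.mpr (List.mem_ofFn.mpr ⟨j, rfl⟩)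
  let P : OrderedPartition Ω (m + 1) :=
    { classes := (L.map fun x => ({x} : Set Ω)) ++ (if C.Nonempty then [C] else [])
      length_le := by
        have h1 : L.length ≤ m := by
          simpa using (List.dedup_sublist (List.ofFn α)).length_le
        have h2 : (if C.Nonempty then [C] else []).length ≤ 1 := by
          split <;> simp
        calc ((L.map fun x => ({x} : Set Ω)) ++
              (if C.Nonempty then [C] else [])).length
            = L.length + (if C.Nonempty then [C] else []).length := by simp
          _ ≤ m + 1 := add_le_add h1 h2
      nonempty := by
        intro s hs
        rcases List.mem_append.mp hs with h | h
        · obtain ⟨x, _, rfl⟩ := List.mem_map.mp h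
          exact Set.singleton_nonempty x
        · split at h
          · rcases List.mem_singleton.mp h with rfl
            assumption
          · simp at h
      pairwise_disjoint := by
        rw [List.pairwise_append]
        refine ⟨?_, ?_, ?_⟩
        · refine List.Pairwise.map _ (fun x y hxy => ?_) (List.nodup_dedup _)
          exact Set.disjoint_singleton.mpr hxy
        · split <;> simp
        · intro s hs t ht
          obtain ⟨x, hx, rfl⟩ := List.mem_map.mp hs
          have hxr : x ∈ Set.range α := by
            obtain ⟨j, hj⟩ := List.mem_ofFn.mp (List.mem_dedup.mp hx)
            exact ⟨j, hj⟩
          split at ht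
          · rcases List.mem_singleton.mp ht with rfl
            exact Set.disjoint_singleton_left.mpr (by simpa [hC] using hxr)
          · simp at ht
      covers := by
        intro x
        by_cases hx : x ∈ Set.range α
        · obtain ⟨j, rfl⟩ := hx
          exact ⟨{α j}, List.mem_append.mpr (Or.inl
            (List.mem_map.mpr ⟨α j, hmemL j, rfl⟩)), rfl⟩
        · have hne : C.Nonempty := ⟨x, hx⟩
          refine ⟨C, List.mem_append.mpr (Or.inr ?_), hx⟩
          rw [if_pos hne]
          exact List.mem_singleton.mpr rfl }
  -- f • P is in the H-orbit of P, hence in the G-orbit of P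
  have hmem : f • P ∈ MulAction.orbit G P := by
    rw [← hH P]
    exact ⟨⟨f, hf⟩, rfl⟩
  obtain ⟨⟨g, hg⟩, hgP⟩ := hmem
  refine ⟨g, hg, fun j => ?_⟩
  have hcls : P.classes.map (fun s => g '' s) = P.classes.map (fun s => f '' s) := by
    have hgP' : (g : Equiv.Perm Ω) • P = f • P := hgP
    have := congrArg OrderedPartition.classes hgP'
    rwa [OrderedPartition.smul_classes, OrderedPartition.smul_classes] at this
  have hsing : ({α j} : Set Ω) ∈ P.classes :=
    List.mem_append.mpr (Or.inl (List.mem_map.mpr ⟨α j, hmemL j, rfl⟩))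
  have := (List.map_eq_map_iff.mp hcls) _ hsing
  rw [Set.image_singleton, Set.image_singleton] at this
  exact (Set.singleton_eq_singleton_iff.mp this).symm
end

section
/- Let n ≥ 3 and let G = Alt(n) in its standard action on Ω = {1,…,n}. Then for every natural number m, G^[m] = Sym(n) if m ≤ n − 1, and G^[m] = G if m ≥ n. -/
open Equiv MulAction Pointwise

lemma exists_two_mem {Ω : Type*} [Fintype Ω] {m : ℕ} (P : OrderedPartition Ω m)
    (h : P.classes.length < Fintype.card Ω) :
    ∃ s ∈ P.classes, ∃ x ∈ s, ∃ y ∈ s, x ≠ y := by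
  by_contra hc
  push_neg at hc
  have hf : ∀ x : Ω, ∃ i : Fin P.classes.length, x ∈ P.classes.get i := by
    intro x
    obtain ⟨s, hs, hx⟩ := P.covers x
    obtain ⟨i, rfl⟩ := List.mem_iff_get.mp hs
    exact ⟨i, hx⟩
  choose f hfmem using hf
  have hinj : Function.Injective f := by
    intro x y hxy
    exact hc _ (P.classes.get_mem _) x (hfmem x) y (hxy ▸ hfmem y)
  have := Fintype.card_le_of_injective f hinj
  simp at this
  omega

lemma swap_image_eq {Ω : Type*} [DecidableEq Ω] {x y : Ω} {t : Set Ω}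
    (h : (x ∈ t ∧ y ∈ t) ∨ (x ∉ t ∧ y ∉ t)) : Equiv.swap x y '' t = t := by
  have key : ∀ z, z ∈ t → Equiv.swap x y z ∈ t := by
    intro z hz
    rcases eq_or_ne z x with rfl | hzx
    · rcases h with ⟨_, hy⟩ | ⟨hx, _⟩
      · simpa [Equiv.swap_apply_left] using hy
      · exact absurd hz hx
    rcases eq_or_ne z y with rfl | hzy
    · rcases h with ⟨hx, _⟩ | ⟨_, hy⟩
      · simpa [Equiv.swap_apply_right] using hx
      · exact absurd hz hy
    · rwa [Equiv.swap_apply_of_ne_of_ne hzx hzy]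
  ext z
  constructor
  · rintro ⟨w, hw, rfl⟩
    exact key w hw
  · intro hz
    exact ⟨Equiv.swap x y z, key z hz, Equiv.swap_apply_self _ _ _⟩

lemma swap_smul_eq {Ω : Type*} [DecidableEq Ω] {m : ℕ} (P : OrderedPartition Ω m)
    {s : Set Ω} {x y : Ω} (hs : s ∈ P.classes) (hx : x ∈ s) (hy : y ∈ s) :
    Equiv.swap x y • P = P := by
  apply OrderedPartition.ext'
  rw [OrderedPartition.smul_classes]
  have : ∀ t ∈ P.classes, Equiv.swap x y '' t = t := by
    intro t ht
    apply swap_image_eq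
    by_cases hst : s = t
    · exact Or.inl ⟨hst ▸ hx, hst ▸ hy⟩
    · have hd : Disjoint s t := by
        have hsym : Symmetric (Disjoint (α := Set Ω)) := fun a b h => h.symm
        exact (haveI : Std.Symm (Disjoint (α := Set Ω)) := ⟨fun a b h => h.symm⟩; P.pairwise_disjoint.forall hs ht hst)
      exact Or.inr ⟨fun hxt => hd.ne_of_mem hx hxt rfl, fun hyt => hd.ne_of_mem hy hyt rfl⟩
  calc P.classes.map (fun t => Equiv.swap x y '' t) = P.classes.map id :=
        List.map_congr_left this
    _ = P.classes := List.map_id _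

def singletonPartition (n m : ℕ) (h : n ≤ m) : OrderedPartition (Fin n) m where
  classes := (List.finRange n).map fun i => ({i} : Set (Fin n))
  length_le := by simpa using h
  nonempty := by
    rintro s hs
    obtain ⟨i, _, rfl⟩ := List.mem_map.mp hs
    exact ⟨i, rfl⟩
  pairwise_disjoint := by
    refine List.Pairwise.map _ (fun a b hab => ?_) (List.nodup_finRange n)
    simpa [Set.disjoint_singleton] using hab
  covers := fun x => ⟨{x}, List.mem_map.mpr ⟨x, List.mem_finRange x, rfl⟩, rfl⟩

/-- For `n ≥ 3` and `G = Alt(n)`: `G^[m] = Sym(n)` if `m ≤ n - 1`, and `G^[m] = G`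
if `m ≥ n`. -/
theorem partClosure_alternatingGroup {n : ℕ} (hn : 3 ≤ n) (m : ℕ) :
    (m ≤ n - 1 → partClosure m (alternatingGroup (Fin n)) = ⊤) ∧
    (n ≤ m → partClosure m (alternatingGroup (Fin n)) = alternatingGroup (Fin n)) := by
  constructor
  · intro hm
    refine le_antisymm le_top (le_sSup ?_)
    intro P
    apply le_antisymm
    · rintro _ ⟨⟨σ, -⟩, rfl⟩
      obtain ⟨s, hs, x, hx, y, hy, hxy⟩ := exists_two_mem P (by
        have := P.length_le
        simp only [Fintype.card_fin]
        omega)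
      rcases Int.units_eq_one_or (Equiv.Perm.sign σ) with hsgn | hsgn
      · exact ⟨⟨σ, Equiv.Perm.mem_alternatingGroup.mpr hsgn⟩, rfl⟩
      · refine ⟨⟨σ * Equiv.swap x y, ?_⟩, ?_⟩
        · rw [Equiv.Perm.mem_alternatingGroup, map_mul, hsgn, Equiv.Perm.sign_swap hxy]
          decide
        · show (σ * Equiv.swap x y) • P = σ • P
          rw [mul_smul, swap_smul_eq P hs hx hy]
    · rintro _ ⟨⟨σ, -⟩, rfl⟩
      exact ⟨⟨σ, trivial⟩, rfl⟩
  · intro hm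
    refine le_antisymm (sSup_le ?_) (le_sSup fun P => rfl)
    intro H hH σ hσ
    have h1 : (σ : Equiv.Perm (Fin n)) • singletonPartition n m hm ∈
        MulAction.orbit H (singletonPartition n m hm) := ⟨⟨σ, hσ⟩, rfl⟩
    rw [hH] at h1
    obtain ⟨⟨g, hg⟩, hgP⟩ := h1
    have hgP' : (g : Equiv.Perm (Fin n)) • singletonPartition n m hm =
        σ • singletonPartition n m hm := hgP
    have hcl : ((g : Equiv.Perm (Fin n)) • singletonPartition n m hm).classes =
        ((σ : Equiv.Perm (Fin n)) • singletonPartition n m hm).classes := by rw [hgP']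
    rw [OrderedPartition.smul_classes, OrderedPartition.smul_classes] at hcl
    simp only [singletonPartition, List.map_map, Function.comp_def, Set.image_singleton] at hcl
    have heq : g = σ := Equiv.ext fun i => by
      have h2 := List.map_inj_left.mp hcl i (List.mem_finRange i)
      simpa [Set.singleton_eq_singleton_iff] using h2
    exact heq ▸ hg
end

section
/- Let Γ be a finite set, K ≤ Sym(Γ), Δ = {1,…,d}, Ω = Γ^d, and m a positive integer. Let k = min{k_m, d}, where k_m is the number of orbits of K in its componentwise action on Γ^m. Then the mapping Ω^m → Δ^[k], α ↦ Π(α), is well defined (i.e., Π(α) is an ordered partition of Δ into at most k nonempty classes for every α ∈ Ω^m) and surjective. -/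
open Equiv MulAction Pointwise

/-- **Lemma.** Given an enumeration `sIdx : Γ^m → Fin a` of the orbits of `K` on `Γ^m`
(fibers of `sIdx` are exactly the orbits, and it is surjective so `a = k_m`), the mapping
`Ω^m → Δ^[k]`, `α ↦ Π(α)`, where `k = min{k_m, d}`, is well defined (each `Π(α)` is an
ordered partition of `Δ = Fin d` into at most `k` nonempty classes) and surjective. -/
theorem piClasses_wellDefined_and_surjective {Γ : Type*} [Fintype Γ] {d m a : ℕ}
    (K : Subgroup (Equiv.Perm Γ)) (hm : 1 ≤ m)
    (sIdx : (Fin m → Γ) → Fin a)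
    (horb : ∀ β γ : Fin m → Γ, sIdx β = sIdx γ ↔ ∃ g ∈ K, ∀ j, g (β j) = γ j)
    (hsurj : Function.Surjective sIdx) :
    (∀ α : Fin m → (Fin d → Γ),
        (piClasses sIdx α).length ≤ min a d ∧
        (∀ s ∈ piClasses sIdx α, s.Nonempty) ∧
        (piClasses sIdx α).Pairwise Disjoint ∧
        (∀ i : Fin d, ∃ s ∈ piClasses sIdx α, i ∈ s)) ∧
    (∀ P : OrderedPartition (Fin d) (min a d),
        ∃ α : Fin m → (Fin d → Γ), piClasses sIdx α = P.classes) := by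
  classical
  constructor
  · intro α
    set f : Fin d → Fin a := fun i => sIdx fun j => α j i with hf
    refine ⟨?_, ?_, ?_, ?_⟩
    · have h1 : (piClasses sIdx α).length = (Finset.univ.image f).card := by
        simp [piClasses, Finset.length_sort]; rfl
      rw [h1]
      refine le_min ?_ ?_
      · simpa using Finset.card_le_univ (Finset.univ.image f)
      · simpa using Finset.card_image_le (s := (Finset.univ : Finset (Fin d))) (f := f)
    · intro s hs
      simp only [piClasses, List.mem_map, Finset.mem_sort, Finset.mem_image,
        Finset.mem_univ, true_and] at hs
      obtain ⟨t, ⟨i, hi⟩, rfl⟩ := hs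
      exact ⟨i, hi⟩
    · have hnd : ((Finset.univ.image f).sort (· ≤ ·)).Nodup := Finset.sort_nodup _ _
      refine List.Pairwise.map (R := fun t t' : Fin a => t ≠ t') _ ?_ (List.Nodup.pairwise_of_forall_ne hnd ?_)
      · intro t t' htt'
        rw [Set.disjoint_left]
        intro i hi hi'
        exact htt' (hi.symm.trans hi')
      · intro t _ t' _ h; exact h
    · intro i
      refine ⟨{i' : Fin d | f i' = f i}, ?_, rfl⟩
      simp only [piClasses, List.mem_map, Finset.mem_sort, Finset.mem_image,
        Finset.mem_univ, true_and]
      exact ⟨f i, ⟨i, rfl⟩, rfl⟩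
  · intro P
    set r := P.classes.length with hrdef
    have hra : r ≤ a := le_trans P.length_le (min_le_left _ _)
    -- index of the class containing i
    have hexists : ∀ i : Fin d, ∃ ℓ : Fin r, i ∈ P.classes.get ℓ := by
      intro i
      obtain ⟨s, hs, hi⟩ := P.covers i
      rw [List.mem_iff_get] at hs
      obtain ⟨ℓ, rfl⟩ := hs
      exact ⟨ℓ, hi⟩
    choose idx hidx using hexists
    have huniq : ∀ (i : Fin d) (ℓ : Fin r), i ∈ P.classes.get ℓ → idx i = ℓ := by
      intro i ℓ hℓ
      by_contra hne
      have hd : Disjoint (P.classes.get (idx i)) (P.classes.get ℓ) := by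
        rcases lt_or_gt_of_ne hne with h | h
        · exact (List.pairwise_iff_get.mp P.pairwise_disjoint _ _ h)
        · exact (List.pairwise_iff_get.mp P.pairwise_disjoint _ _ h).symm
      exact (Set.disjoint_left.mp hd (hidx i)) hℓ
    -- representatives
    choose β hβ using fun ℓ : Fin r => hsurj (Fin.castLE hra ℓ)
    refine ⟨fun j i => β (idx i) j, ?_⟩
    set f : Fin d → Fin a := fun i => sIdx fun j => β (idx i) j with hf
    have hfval : ∀ i, f i = Fin.castLE hra (idx i) := fun i => hβ (idx i)
    -- idx is surjective
    have hidxsurj : ∀ ℓ : Fin r, ∃ i, idx i = ℓ := by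
      intro ℓ
      obtain ⟨i, hi⟩ := P.nonempty _ (P.classes.get_mem ℓ)
      exact ⟨i, huniq i ℓ hi⟩
    have himg : Finset.univ.image f = Finset.univ.image (Fin.castLE hra) := by
      ext t
      simp only [Finset.mem_image, Finset.mem_univ, true_and]
      constructor
      · rintro ⟨i, rfl⟩; exact ⟨idx i, (hfval i).symm⟩
      · rintro ⟨ℓ, rfl⟩
        obtain ⟨i, hi⟩ := hidxsurj ℓ
        exact ⟨i, by rw [hfval, hi]⟩
    have hsort : (Finset.univ.image f).sort (· ≤ ·)
        = (List.finRange r).map (Fin.castLE hra) := by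
      rw [himg]
      refine (fun hp h2 => List.Perm.eq_of_pairwise' (Finset.pairwise_sort _ _) h2 hp) ?_ ?_
      · refine (List.perm_ext_iff_of_nodup (Finset.sort_nodup _ _) ?_).mpr ?_
        · exact (List.nodup_finRange r).map (Fin.castLE_injective hra)
        · intro t
          simp [Finset.mem_sort, List.mem_map, List.mem_finRange]
      · refine List.Pairwise.map _ (fun x y (h : x ≤ y) => ?_) (List.pairwise_le_finRange r)
        exact h
    have hfiber : ∀ ℓ : Fin r,
        {i : Fin d | f i = Fin.castLE hra ℓ} = P.classes.get ℓ := by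
      intro ℓ
      ext i
      simp only [Set.mem_setOf_eq, hfval]
      constructor
      · intro h
        have : idx i = ℓ := Fin.castLE_injective hra h
        exact this ▸ hidx i
      · intro h; rw [huniq i ℓ h]
    rw [piClasses]
    rw [show (fun i : Fin d => sIdx fun j => β (idx i) j) = f from rfl] at *
    rw [hsort, List.map_map]
    refine List.ext_getElem ?_ ?_
    · simp [hrdef]
    · intro n h1 h2
      simp only [List.getElem_map, List.getElem_finRange, Function.comp_apply]
      have hn : n < r := by simpa using h1
      have := hfiber (⟨n, hn⟩ : Fin r)
      simp only [List.get_eq_getElem] at this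
      convert this using 2
      rfl
end

section
/- Let Γ and Δ = {1,…,d} be finite sets, K ≤ Sym(Γ), L ≤ Sym(Δ), and m ≥ 2 an integer. Then (K↑L)^(m) ≤ Sym(Γ) ↑ Sym(Δ); in particular, every element of (K↑L)^(m) can be written in the form h = (h_1,…,h_d; h̄) with h_1,…,h_d ∈ Sym(Γ) and h̄ ∈ Sym(Δ). -/
open Equiv MulAction Pointwise

namespace WreathAux

variable {Γ : Type*} {d : ℕ}

/-- Disagreement set of two tuples. -/
def Dset (ω ω' : Fin d → Γ) : Set (Fin d) := {i | ω i ≠ ω' i}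

theorem mem_Dset {ω ω' : Fin d → Γ} {i : Fin d} : i ∈ Dset ω ω' ↔ ω i ≠ ω' i := Iff.rfl

theorem Dset_comm (ω ω' : Fin d → Γ) : Dset ω ω' = Dset ω' ω := by
  ext i; exact ne_comm

theorem Dset_triangle (ω ω' ω'' : Fin d → Γ) :
    Dset ω ω'' ⊆ Dset ω ω' ∪ Dset ω' ω'' := by
  intro i hi
  by_cases h : ω i = ω' i
  · exact Or.inr (fun h' => hi (h.trans h'))
  · exact Or.inl h

theorem Dset_eq_empty_iff {ω ω' : Fin d → Γ} : Dset ω ω' = ∅ ↔ ω = ω' := by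
  constructor
  · intro h; funext i
    by_contra hne
    exact (Set.notMem_empty i) (h ▸ hne)
  · rintro rfl; ext i; simp [Dset]

theorem Dset_update {ω : Fin d → Γ} {i : Fin d} {γ : Γ} (h : γ ≠ ω i) :
    Dset ω (Function.update ω i γ) = {i} := by
  ext k
  by_cases hk : k = i
  · subst hk; simpa [mem_Dset, Function.update_self] using Ne.symm h
  · simp [mem_Dset, Function.update_of_ne hk, hk]

/-- The line through `ω` in direction `i`. -/
def lineS (i : Fin d) (ω : Fin d → Γ) : Set (Fin d → Γ) := {x | Dset ω x ⊆ {i}}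

theorem self_mem_lineS (i : Fin d) (ω : Fin d → Γ) : ω ∈ lineS i ω := by
  intro k hk; exact absurd rfl hk

theorem update_mem_lineS (i : Fin d) (ω : Fin d → Γ) (γ : Γ) :
    Function.update ω i γ ∈ lineS i ω := by
  intro k hk
  by_contra hki
  exact hk (Function.update_of_ne hki γ ω).symm

theorem Dset_subset_of_mem_lineS {i : Fin d} {ω x y : Fin d → Γ}
    (hx : x ∈ lineS i ω) (hy : y ∈ lineS i ω) : Dset x y ⊆ {i} :=
  (Dset_triangle x ω y).trans (Set.union_subset ((Dset_comm ω x) ▸ hx) hy)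

theorem lineS_eq_of_mem {i : Fin d} {ω ω' : Fin d → Γ} (h : ω' ∈ lineS i ω) :
    lineS i ω' = lineS i ω := by
  ext x
  constructor
  · intro hx
    exact (Dset_triangle ω ω' x).trans (Set.union_subset h hx)
  · intro hx
    exact (Dset_triangle ω' ω x).trans (Set.union_subset ((Dset_comm ω ω') ▸ h) hx)

/-- A line determines its direction (given `Nontrivial Γ`). -/
theorem lineS_dir [Nontrivial Γ] {j j' : Fin d} {x x' : Fin d → Γ}
    (h : lineS j x = lineS j' x') : j = j' := by
  obtain ⟨γ, hγ⟩ := exists_ne (x j)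
  have h1 : x ∈ lineS j' x' := h ▸ self_mem_lineS j x
  have h2 : Function.update x j γ ∈ lineS j' x' := h ▸ update_mem_lineS j x γ
  have := Dset_subset_of_mem_lineS h1 h2
  rw [Dset_update hγ] at this
  exact this rfl

/-- Triangle uniqueness: adjacent triangle edges from a common vertex share direction. -/
theorem tri {x y z : Fin d → Γ} {a b c : Fin d}
    (hxy : Dset x y = {a}) (hxz : Dset x z = {b}) (hyz : Dset y z ⊆ {c}) : a = b := by
  by_contra hab
  have hyb : y b = x b := by
    by_contra h
    have : b ∈ Dset x y := fun h' => h h'.symm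
    rw [hxy] at this
    exact hab this.symm
  have hxb : x b ≠ z b := by
    have : b ∈ Dset x z := hxz ▸ rfl
    exact this
  have hb : b ∈ Dset y z := fun h => hxb (hyb ▸ h)
  have hya : x a ≠ y a := by
    have : a ∈ Dset x y := hxy ▸ rfl
    exact this
  have hza : x a = z a := by
    by_contra h
    have : a ∈ Dset x z := h
    rw [hxz] at this
    exact hab this
  have ha : a ∈ Dset y z := fun h => hya (by rw [← hza] at h; exact h.symm)
  have := hyz hb
  have := hyz ha
  rw [Set.mem_singleton_iff] at *
  exact hab (by grind)

end WreathAux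

namespace WreathAux

variable {Γ : Type*} {d : ℕ}

/-- The key property: `f` transforms disagreement sets by (pair-dependent) permutations. -/
def Hyp (f : Perm (Fin d → Γ)) : Prop :=
  ∀ ω ω' : Fin d → Γ, ∃ e : Perm (Fin d), Dset (f ω) (f ω') = e '' Dset ω ω'

theorem Hyp.symm {f : Perm (Fin d → Γ)} (hf : Hyp f) : Hyp f.symm := by
  intro a b
  obtain ⟨e, he⟩ := hf (f.symm a) (f.symm b)
  simp only [Equiv.apply_symm_apply] at he
  refine ⟨e.symm, ?_⟩
  rw [he, ← Set.image_comp]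
  simp [Function.comp_def]

theorem Hyp.adj {f : Perm (Fin d → Γ)} (hf : Hyp f) {ω ω' : Fin d → Γ} {k : Fin d}
    (h : Dset ω ω' = {k}) : ∃ j, Dset (f ω) (f ω') = {j} := by
  obtain ⟨e, he⟩ := hf ω ω'
  exact ⟨e k, by rw [he, h, Set.image_singleton]⟩

theorem Hyp.sub_singleton {f : Perm (Fin d → Γ)} (hf : Hyp f) {ω ω' : Fin d → Γ} {k : Fin d}
    (h : Dset ω ω' ⊆ {k}) : ∃ j, Dset (f ω) (f ω') ⊆ {j} := by
  obtain ⟨e, he⟩ := hf ω ω'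
  refine ⟨e k, ?_⟩
  rw [he]
  intro i hi
  obtain ⟨x, hx, rfl⟩ := hi
  simp [Set.mem_singleton_iff.mp (h hx)]

theorem Hyp.near {f : Perm (Fin d → Γ)} (hf : Hyp f) {ω ω' : Fin d → Γ} {a b : Fin d}
    (h : Dset ω ω' ⊆ {a, b}) : ∃ p q, Dset (f ω) (f ω') ⊆ {p, q} := by
  obtain ⟨e, he⟩ := hf ω ω'
  refine ⟨e a, e b, ?_⟩
  rw [he]
  rintro i ⟨x, hx, rfl⟩
  rcases h hx with h' | h' <;> simp_all

/-- Forward half: `f` maps each line into some line. -/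
theorem mapsLine [Nontrivial Γ] {f : Perm (Fin d → Γ)} (hf : Hyp f) (ω : Fin d → Γ)
    (i : Fin d) : ∃ j, f '' lineS i ω ⊆ lineS j (f ω) := by
  obtain ⟨γ, hγ⟩ := exists_ne (ω i)
  set x₀ := Function.update ω i γ with hx₀
  have hD0 : Dset ω x₀ = {i} := Dset_update hγ
  obtain ⟨j, hj⟩ := hf.adj hD0
  refine ⟨j, ?_⟩
  rintro _ ⟨x, hx, rfl⟩
  show Dset (f ω) (f x) ⊆ {j}
  by_cases hxω : x = ω
  · subst hxω; rw [Dset_eq_empty_iff.mpr rfl]; exact Set.empty_subset _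
  · have hDx : Dset ω x = {i} := by
      refine Set.Subset.antisymm hx (Set.singleton_subset_iff.mpr ?_)
      intro he'
      apply hxω
      funext k
      by_contra h'
      have hk : k ∈ Dset ω x := fun e => h' e.symm
      rw [Set.mem_singleton_iff.mp (hx hk)] at h'
      exact h' he'.symm
    obtain ⟨j', hj'⟩ := hf.adj hDx
    obtain ⟨c, hc⟩ := hf.sub_singleton
      (Dset_subset_of_mem_lineS (update_mem_lineS i ω γ) hx)
    rw [tri hj hj' hc, ← hj']

/-- `f` maps each line onto some line. -/
theorem mapsLine_onto [Nontrivial Γ] {f : Perm (Fin d → Γ)} (hf : Hyp f) (ω : Fin d → Γ)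
    (i : Fin d) : ∃ j, f '' lineS i ω = lineS j (f ω) := by
  obtain ⟨j, hj⟩ := mapsLine hf ω i
  obtain ⟨j₂, hj₂⟩ := mapsLine hf.symm (f ω) j
  rw [Equiv.symm_apply_apply] at hj₂
  refine ⟨j, Set.Subset.antisymm hj ?_⟩
  have hsub : lineS i ω ⊆ lineS j₂ ω := by
    intro x hx
    have : f.symm (f x) ∈ f.symm '' (lineS j (f ω)) :=
      Set.mem_image_of_mem _ (hj (Set.mem_image_of_mem _ hx))
    rw [Equiv.symm_apply_apply] at this
    exact hj₂ (by simpa using Set.mem_image_of_mem f.symm (hj (Set.mem_image_of_mem f hx)))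
  have hij : i = j₂ := by
    obtain ⟨γ, hγ⟩ := exists_ne (ω i)
    have h1 := hsub (self_mem_lineS i ω)
    have h2 := hsub (update_mem_lineS i ω γ)
    have := Dset_subset_of_mem_lineS h1 h2
    rw [Dset_update hγ] at this
    exact this rfl
  subst hij
  intro y hy
  have : f.symm y ∈ lineS i ω := hj₂ (Set.mem_image_of_mem _ hy)
  exact ⟨f.symm y, this, by simp⟩

end WreathAux

namespace WreathAux

variable {Γ : Type*} {d : ℕ}

/-- The direction map of `f` at `ω`. -/
noncomputable def dirMap [Nontrivial Γ] {f : Perm (Fin d → Γ)} (hf : Hyp f)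
    (ω : Fin d → Γ) (i : Fin d) : Fin d :=
  (mapsLine_onto hf ω i).choose

theorem dirMap_spec [Nontrivial Γ] {f : Perm (Fin d → Γ)} (hf : Hyp f)
    (ω : Fin d → Γ) (i : Fin d) : f '' lineS i ω = lineS (dirMap hf ω i) (f ω) :=
  (mapsLine_onto hf ω i).choose_spec

theorem dirMap_injective [Nontrivial Γ] {f : Perm (Fin d → Γ)} (hf : Hyp f)
    (ω : Fin d → Γ) : Function.Injective (dirMap hf ω) := by
  intro i i' h
  have h1 := dirMap_spec hf ω i
  have h2 := dirMap_spec hf ω i'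
  rw [h] at h1
  have : lineS i ω = lineS i' ω :=
    Set.image_injective.mpr f.injective (h1.trans h2.symm)
  exact lineS_dir this

/-- Two disjoint lines all of whose cross-pairs are near must be parallel. -/
theorem parallel [Nontrivial Γ] {j j' : Fin d} {a b : Fin d → Γ}
    (hd : Disjoint (lineS j a) (lineS j' b))
    (hnear : ∀ x ∈ lineS j a, ∀ y ∈ lineS j' b, ∃ p q, Dset x y ⊆ {p, q}) : j = j' := by
  by_contra hjj
  by_cases hagree : ∀ c, c ≠ j → c ≠ j' → a c = b c
  · -- the lines would intersect
    set z : Fin d → Γ := fun k => if k = j then b j else a k with hz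
    have hza : z ∈ lineS j a := by
      intro k hk
      rw [Set.mem_singleton_iff]
      by_contra hkj
      have hzk : z k = a k := by simp [hz, hkj]
      exact hk hzk.symm
    have hzb : z ∈ lineS j' b := by
      intro k hk
      rw [Set.mem_singleton_iff]
      by_contra hkj'
      apply hk
      by_cases hkj : k = j
      · subst hkj; simp [hz]
      · rw [show z k = a k by simp [hz, hkj], hagree k hkj hkj']
    exact Set.disjoint_left.mp hd hza hzb
  · push_neg at hagree
    obtain ⟨c, hcj, hcj', hab⟩ := hagree
    obtain ⟨γ, hγ⟩ := exists_ne (b j)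
    obtain ⟨δ, hδ⟩ := exists_ne (a j')
    set x := Function.update a j γ with hx
    set y := Function.update b j' δ with hy
    obtain ⟨p, q, hpq⟩ := hnear x (update_mem_lineS j a γ) y (update_mem_lineS j' b δ)
    have hmj : j ∈ Dset x y := by
      show x j ≠ y j
      rw [hx, hy]
      rw [Function.update_self, Function.update_of_ne hjj]
      exact hγ
    have hmj' : j' ∈ Dset x y := by
      show x j' ≠ y j'
      rw [hx, hy, Function.update_of_ne (Ne.symm hjj), Function.update_self]
      exact fun h => hδ h.symm
    have hmc : c ∈ Dset x y := by
      show x c ≠ y c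
      rw [hx, hy, Function.update_of_ne hcj, Function.update_of_ne hcj']
      exact hab
    have h1 := hpq hmj
    have h2 := hpq hmj'
    have h3 := hpq hmc
    simp only [Set.mem_insert_iff, Set.mem_singleton_iff] at h1 h2 h3
    rcases h1 with h1 | h1 <;> rcases h2 with h2 | h2 <;> rcases h3 with h3 | h3 <;>
      simp_all

end WreathAux

namespace WreathAux

variable {Γ : Type*} {d : ℕ}

theorem dirMap_adj [Nontrivial Γ] {f : Perm (Fin d → Γ)} (hf : Hyp f)
    {ω ω' : Fin d → Γ} {k : Fin d} (hωω' : Dset ω ω' = {k}) :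
    dirMap hf ω = dirMap hf ω' := by
  funext i
  by_cases hik : i = k
  · subst hik
    have hmem : ω' ∈ lineS i ω := by rw [lineS]; exact hωω'.le
    have hle : lineS i ω' = lineS i ω := lineS_eq_of_mem hmem
    have h1 := dirMap_spec hf ω i
    have h2 := dirMap_spec hf ω' i
    rw [hle, h1] at h2
    exact lineS_dir h2
  · -- parallel lines argument
    have hdisj : Disjoint (lineS i ω) (lineS i ω') := by
      rw [Set.disjoint_left]
      intro x hx hx'
      have : Dset ω ω' ⊆ {i} :=
        (Dset_triangle ω x ω').trans
          (Set.union_subset hx ((Dset_comm ω' x) ▸ hx'))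
      rw [hωω'] at this
      exact hik (Set.mem_singleton_iff.mp (this rfl)).symm
    have h1 := dirMap_spec hf ω i
    have h2 := dirMap_spec hf ω' i
    have hdisj' : Disjoint (lineS (dirMap hf ω i) (f ω)) (lineS (dirMap hf ω' i) (f ω')) := by
      rw [← h1, ← h2]
      exact (Set.disjoint_image_iff f.injective).mpr hdisj
    apply parallel hdisj'
    intro u hu v hv
    rw [← h1] at hu
    rw [← h2] at hv
    obtain ⟨x, hx, rfl⟩ := hu
    obtain ⟨y, hy, rfl⟩ := hv
    apply hf.near (a := i) (b := k)
    calc Dset x y ⊆ Dset x ω ∪ (Dset ω ω' ∪ Dset ω' y) :=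
          (Dset_triangle x ω y).trans
            (Set.union_subset_union_right _ (Dset_triangle ω ω' y))
      _ ⊆ {i, k} := by
          rw [hωω']
          refine Set.union_subset ?_ (Set.union_subset ?_ ?_)
          · exact ((Dset_comm x ω).le.trans hx).trans (by intro t ht; exact Or.inl ht)
          · intro t ht; exact Or.inr ht
          · exact hy.trans (by intro t ht; exact Or.inl ht)

theorem dirMap_const [Nontrivial Γ] {f : Perm (Fin d → Γ)} (hf : Hyp f)
    (ω ω' : Fin d → Γ) : dirMap hf ω = dirMap hf ω' := by
  classical
  set n := (Finset.univ.filter fun k => ω k ≠ ω' k).card with hn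
  clear_value n
  induction n using Nat.strong_induction_on generalizing ω ω' with
  | _ n ih =>
    by_cases hee : ω = ω'
    · rw [hee]
    · have hne : ∃ k, ω k ≠ ω' k := by
        by_contra h
        push_neg at h
        exact hee (funext h)
      obtain ⟨k, hk⟩ := hne
      set ω'' := Function.update ω k (ω' k) with hω''
      have hstep : Dset ω ω'' = {k} := Dset_update (Ne.symm hk)
      have h1 : dirMap hf ω = dirMap hf ω'' := dirMap_adj hf hstep
      have hcard : (Finset.univ.filter fun l => ω'' l ≠ ω' l).card < n := by
        have hsub : (Finset.univ.filter fun l => ω'' l ≠ ω' l) ⊆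
            (Finset.univ.filter fun l => ω l ≠ ω' l) \ {k} := by
          intro l hl
          simp only [Finset.mem_filter, Finset.mem_univ, true_and] at hl
          by_cases hlk : l = k
          · subst hlk
            exact absurd (by simp [hω'']) hl
          · simp only [Finset.mem_sdiff, Finset.mem_filter, Finset.mem_univ, true_and,
              Finset.mem_singleton]
            rw [hω''] at hl
            rw [Function.update_of_ne hlk] at hl
            exact ⟨hl, hlk⟩
        calc (Finset.univ.filter fun l => ω'' l ≠ ω' l).card
            ≤ ((Finset.univ.filter fun l => ω l ≠ ω' l) \ {k}).card :=
              Finset.card_le_card hsub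
          _ < (Finset.univ.filter fun l => ω l ≠ ω' l).card := by
              apply Finset.card_lt_card
              rw [Finset.ssubset_iff_of_subset (Finset.sdiff_subset)]
              exact ⟨k, by simp [hk], by simp⟩
          _ = n := hn.symm
      exact h1.trans (ih _ hcard ω'' ω' rfl)

end WreathAux

namespace WreathAux

variable {Γ : Type*} {d : ℕ}

theorem eval_const [Nontrivial Γ] {f : Perm (Fin d → Γ)} (hf : Hyp f)
    (ω₀ : Fin d → Γ) (i : Fin d) (ω ω' : Fin d → Γ) (h : ω i = ω' i) :
    f ω (dirMap hf ω₀ i) = f ω' (dirMap hf ω₀ i) := by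
  classical
  set σ0 := dirMap hf ω₀ with hσ0
  set n := (Finset.univ.filter fun k => ω k ≠ ω' k).card with hn
  clear_value n
  induction n using Nat.strong_induction_on generalizing ω ω' with
  | _ n ih =>
    by_cases hee : ω = ω'
    · rw [hee]
    · have hne : ∃ k, ω k ≠ ω' k := by
        by_contra hc
        push_neg at hc
        exact hee (funext hc)
      obtain ⟨k, hk⟩ := hne
      have hki : k ≠ i := fun e => hk (e ▸ h)
      set ω'' := Function.update ω k (ω' k) with hω''
      have hmem : ω'' ∈ lineS k ω := update_mem_lineS k ω (ω' k)
      have himg : f ω'' ∈ lineS (σ0 k) (f ω) := by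
        have := dirMap_spec hf ω k
        rw [dirMap_const hf ω ω₀, ← hσ0] at this
        rw [← this]
        exact Set.mem_image_of_mem f hmem
      have hσne : σ0 i ≠ σ0 k := fun e => hki (dirMap_injective hf ω₀ e).symm
      have h1 : f ω (σ0 i) = f ω'' (σ0 i) := by
        by_contra hc
        exact hσne (Set.mem_singleton_iff.mp (himg hc))
      have hcard : (Finset.univ.filter fun l => ω'' l ≠ ω' l).card < n := by
        have hsub : (Finset.univ.filter fun l => ω'' l ≠ ω' l) ⊆
            (Finset.univ.filter fun l => ω l ≠ ω' l) \ {k} := by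
          intro l hl
          simp only [Finset.mem_filter, Finset.mem_univ, true_and] at hl
          by_cases hlk : l = k
          · subst hlk
            exact absurd (by simp [hω'']) hl
          · simp only [Finset.mem_sdiff, Finset.mem_filter, Finset.mem_univ, true_and,
              Finset.mem_singleton]
            rw [hω''] at hl
            rw [Function.update_of_ne hlk] at hl
            exact ⟨hl, hlk⟩
        calc (Finset.univ.filter fun l => ω'' l ≠ ω' l).card
            ≤ ((Finset.univ.filter fun l => ω l ≠ ω' l) \ {k}).card :=
              Finset.card_le_card hsub
          _ < (Finset.univ.filter fun l => ω l ≠ ω' l).card := by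
              apply Finset.card_lt_card
              rw [Finset.ssubset_iff_of_subset (Finset.sdiff_subset)]
              exact ⟨k, by simp [hk], by simp⟩
          _ = n := hn.symm
      have h2 : ω'' i = ω' i := by
        rw [hω'', Function.update_of_ne (Ne.symm hki), h]
      exact h1.trans (ih _ hcard ω'' ω' h2 rfl)

/-- Main structure theorem: any permutation satisfying `Hyp` is a wreath element. -/
theorem hyp_wreath [Finite Γ] (f : Perm (Fin d → Γ)) (hf : Hyp f) :
    ∃ (hs : Fin d → Perm Γ) (σ : Perm (Fin d)), f = wreathElem hs σ := by
  by_cases hnt : Nontrivial Γ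
  · have : Nonempty Γ := ⟨Classical.choice hnt.to_nonempty⟩
    obtain ⟨γ₀⟩ := this
    set ω₀ : Fin d → Γ := fun _ => γ₀ with hω₀
    set σ0 := dirMap hf ω₀ with hσ0
    have hbij : Function.Bijective σ0 :=
      Finite.injective_iff_bijective.mp (dirMap_injective hf ω₀)
    set σ : Perm (Fin d) := Equiv.ofBijective σ0 hbij with hσ
    have hσ_apply : ∀ i, σ i = σ0 i := fun i => rfl
    -- the coordinate permutations
    have hg_inj : ∀ i : Fin d, Function.Injective
        (fun γ => f (Function.update ω₀ i γ) (σ0 i)) := by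
      intro i γ γ' hgg
      by_contra hne
      have hxy : Function.update ω₀ i γ' ∈ lineS i (Function.update ω₀ i γ) := by
        intro k hk
        by_contra hki
        simp only [Set.mem_singleton_iff] at hki
        have hk' : Function.update ω₀ i γ k ≠ Function.update ω₀ i γ' k := hk
        rw [Function.update_of_ne hki, Function.update_of_ne hki] at hk'
        exact hk' rfl
      have himg : f (Function.update ω₀ i γ') ∈
          lineS (σ0 i) (f (Function.update ω₀ i γ)) := by
        have := dirMap_spec hf (Function.update ω₀ i γ) i
        rw [dirMap_const hf (Function.update ω₀ i γ) ω₀, ← hσ0] at this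
        rw [← this]
        exact Set.mem_image_of_mem f hxy
      have hfne : f (Function.update ω₀ i γ) ≠ f (Function.update ω₀ i γ') := by
        intro hfe
        have := f.injective hfe
        apply hne
        have := congrFun this i
        simpa using this
      have hDne : Dset (f (Function.update ω₀ i γ)) (f (Function.update ω₀ i γ')) ≠ ∅ :=
        fun he => hfne (Dset_eq_empty_iff.mp he)
      obtain ⟨t, ht⟩ := Set.nonempty_iff_ne_empty.mpr hDne
      have := Set.mem_singleton_iff.mp (himg ht)
      subst this
      exact ht hgg
    set hs : Fin d → Perm Γ := fun i =>
      Equiv.ofBijective _ (Finite.injective_iff_bijective.mp (hg_inj i)) with hhs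
    refine ⟨hs, σ, ?_⟩
    apply Equiv.ext
    intro ω
    funext j
    show f ω j = hs (σ⁻¹ j) (ω (σ⁻¹ j))
    set i := σ⁻¹ j with hi
    have hji : j = σ0 i := by
      rw [← hσ_apply]
      exact (Equiv.apply_symm_apply σ j).symm
    have hs_apply : hs i (ω i) = f (Function.update ω₀ i (ω i)) (σ0 i) := rfl
    rw [hji, hs_apply]
    apply eval_const hf ω₀ i
    simp
  · rw [not_nontrivial_iff_subsingleton] at hnt
    refine ⟨fun _ => 1, 1, Equiv.ext fun ω => ?_⟩
    exact Subsingleton.elim _ _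

end WreathAux

theorem mClosure_approx {Ω : Type*} {m : ℕ} (G : Subgroup (Equiv.Perm Ω)) :
    ∀ h ∈ mClosure m G, ∀ α : Fin m → Ω, ∃ g ∈ G, ∀ j, h (α j) = g (α j) := by
  intro h hh
  let H₀ : Subgroup (Equiv.Perm Ω) :=
  { carrier := {h | ∀ α : Fin m → Ω, ∃ g ∈ G, ∀ j, h (α j) = g (α j)}
    one_mem' := fun α => ⟨1, G.one_mem, fun _ => rfl⟩
    mul_mem' := by
      rintro p q hp hq α
      obtain ⟨g', hg', hq'⟩ := hq α
      obtain ⟨g, hg, hp'⟩ := hp (fun j => g' (α j))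
      refine ⟨g * g', G.mul_mem hg hg', fun j => ?_⟩
      simp only [Equiv.Perm.mul_apply]
      rw [hq' j, hp' j]
    inv_mem' := by
      rintro p hp α
      obtain ⟨g, hg, h'⟩ := hp (fun j => p⁻¹ (α j))
      refine ⟨g⁻¹, G.inv_mem hg, fun j => ?_⟩
      have hj := h' j
      rw [Equiv.Perm.inv_def, Equiv.apply_symm_apply, ← Equiv.Perm.inv_def] at hj
      calc p⁻¹ (α j) = g⁻¹ (g (p⁻¹ (α j))) := (Equiv.symm_apply_apply g _).symm
        _ = g⁻¹ (α j) := by rw [← hj] }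
  suffices hle : mClosure m G ≤ H₀ from hle hh
  apply sSup_le
  intro H hH p hp α
  have hmem : p • α ∈ MulAction.orbit G α := by
    rw [← hH α]
    exact ⟨⟨p, hp⟩, rfl⟩
  obtain ⟨⟨g, hg⟩, hgα⟩ := hmem
  refine ⟨g, hg, fun j => ?_⟩
  have := congrFun hgα j
  simpa [Subgroup.smul_def, Equiv.Perm.smul_def] using this.symm

theorem Dset_wreathElem {Γ : Type*} {d : ℕ} (gs : Fin d → Equiv.Perm Γ)
    (σ : Equiv.Perm (Fin d)) (ω ω' : Fin d → Γ) :
    WreathAux.Dset (wreathElem gs σ ω) (wreathElem gs σ ω') = σ '' WreathAux.Dset ω ω' := by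
  ext i
  simp only [WreathAux.mem_Dset, wreathElem_apply, Set.mem_image]
  constructor
  · intro hne
    exact ⟨σ⁻¹ i, fun h => hne (congrArg (gs (σ⁻¹ i)) h), by simp⟩
  · rintro ⟨k, hk, rfl⟩
    rw [Equiv.Perm.inv_def, Equiv.symm_apply_apply]
    exact fun h => hk ((gs k).injective h)

/-- For `m ≥ 2`: `(K↑L)^(m) ≤ Sym(Γ) ↑ Sym(Δ)`; in particular, every element of
`(K↑L)^(m)` is of the form `h = (h_1,…,h_d; h̄)` with `h_i ∈ Sym(Γ)`, `h̄ ∈ Sym(Δ)`. -/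
theorem mClosure_wreath_le_top_wreath {Γ : Type*} [Fintype Γ] {d : ℕ}
    (K : Subgroup (Equiv.Perm Γ)) (L : Subgroup (Equiv.Perm (Fin d)))
    (m : ℕ) (hm : 2 ≤ m) :
    mClosure m (wreathProduct K L) ≤
        wreathProduct (⊤ : Subgroup (Equiv.Perm Γ)) (⊤ : Subgroup (Equiv.Perm (Fin d))) ∧
      ∀ h ∈ mClosure m (wreathProduct K L),
        ∃ (hs : Fin d → Equiv.Perm Γ) (σ : Equiv.Perm (Fin d)), h = wreathElem hs σ := by
  have key : ∀ h ∈ mClosure m (wreathProduct K L),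
      ∃ (hs : Fin d → Equiv.Perm Γ) (σ : Equiv.Perm (Fin d)), h = wreathElem hs σ := by
    intro h hh
    apply WreathAux.hyp_wreath h
    intro ω ω'
    set α : Fin m → (Fin d → Γ) := fun j => if (j : ℕ) = 0 then ω else ω' with hα
    obtain ⟨g, hg, hgj⟩ := mClosure_approx (wreathProduct K L) h hh α
    obtain ⟨gs, σg, -, -, rfl⟩ := hg
    have h1 : h ω = wreathElem gs σg ω := by
      have := hgj ⟨0, by omega⟩
      simpa [hα] using this
    have h2 : h ω' = wreathElem gs σg ω' := by
      have := hgj ⟨1, by omega⟩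
      simpa [hα] using this
    refine ⟨σg, ?_⟩
    rw [h1, h2]
    exact Dset_wreathElem gs σg ω ω'
  refine ⟨fun h hh => ?_, key⟩
  obtain ⟨hs, σ, he⟩ := key h hh
  exact ⟨hs, σ, fun i => Subgroup.mem_top _, Subgroup.mem_top _, he⟩
end
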